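/- arXiv:2412.17768 — 3 statements merged into one kernel-verified Lean document; each statement's English description precedes it below -/
import Mathlib

section
/- Let d > 6 be an integer and let α₁, α₂ be real numbers with α₁ > −d, α₂ > −d and α₁ + α₂ + d < 0. Then there exists a constant C = C(d, α₁, α₂) > 0 such that for all x, y ∈ ℤ^d with x ≠ y, one has ∑_{z ∈ ℤ^d} |z − x|^{α₁} |z − y|^{α₂} ≤ C |x − y|^{α₁ + α₂ + d}, where the (degenerate) terms with z = x or z = y are omitted from the sum. -/
open scoped ENNReal

/-- The power `|x|^a` (ℓ^∞ norm of a lattice point, real exponent), valued in `[0,∞]`,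
with the convention that the term is omitted (set to `0`) when the base vanishes. -/
noncomputable def latPow {d : ℕ} (x : Fin d → ℤ) (a : ℝ) : ℝ≥0∞ :=
  if x = 0 then 0 else ENNReal.ofReal (‖x‖ ^ a)

open scoped NNReal
open Finset

namespace LatAux

variable {d : ℕ}

/-- ℓ^∞ norm of a lattice point as a natural number. -/
def gn (z : Fin d → ℤ) : ℕ := Finset.univ.sup fun i => (z i).natAbs

lemma natAbs_le_gn (z : Fin d → ℤ) (i : Fin d) : (z i).natAbs ≤ gn z :=
  Finset.le_sup (f := fun i => (z i).natAbs) (Finset.mem_univ i)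

lemma norm_eq_gn (z : Fin d → ℤ) : ‖z‖ = (gn z : ℝ) := by
  rw [Pi.norm_def]
  have h : (Nat.cast (Finset.univ.sup fun i => (z i).natAbs) : ℝ≥0) =
      Finset.univ.sup fun b => ‖z b‖₊ := by
    rw [Nat.cast_finsetSup]
    exact Finset.sup_congr rfl fun i _ => (NNReal.natCast_natAbs (z i))
  unfold gn
  rw [← h]
  norm_cast

lemma gn_eq_zero_iff (z : Fin d → ℤ) : gn z = 0 ↔ z = 0 := by
  constructor
  · intro h
    funext i
    have := natAbs_le_gn z i
    rw [h, Nat.le_zero, Int.natAbs_eq_zero] at this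
    simpa using this
  · intro h; subst h; unfold gn; simp

lemma gn_triangle (x y z : Fin d → ℤ) : gn (x - y) ≤ gn (x - z) + gn (z - y) := by
  have : ‖x - y‖ ≤ ‖x - z‖ + ‖z - y‖ := by
    have : x - y = (x - z) + (z - y) := by abel
    rw [this]; exact norm_add_le _ _
  rw [norm_eq_gn, norm_eq_gn, norm_eq_gn] at this
  exact_mod_cast this

lemma gn_neg (z : Fin d → ℤ) : gn (-z) = gn z := by
  unfold gn
  exact Finset.sup_congr rfl fun i _ => by simp

/-- The ball of radius `n` as a `Finset`. -/
noncomputable def ball (d n : ℕ) : Finset (Fin d → ℤ) :=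
  Fintype.piFinset fun _ => Finset.Icc (-(n : ℤ)) n

lemma mem_ball {n : ℕ} {z : Fin d → ℤ} : z ∈ ball d n ↔ gn z ≤ n := by
  unfold ball gn
  rw [Fintype.mem_piFinset, Finset.sup_le_iff]
  constructor
  · intro h i _
    have := h i
    rw [Finset.mem_Icc] at this
    omega
  · intro h i
    have := h i (Finset.mem_univ i)
    rw [Finset.mem_Icc]
    omega

lemma card_ball (n : ℕ) : (ball d n).card = (2 * n + 1) ^ d := by
  unfold ball
  rw [Fintype.card_piFinset]
  simp only [Int.card_Icc]
  rw [Finset.prod_const, Finset.card_univ, Fintype.card_fin]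
  congr 1
  omega

lemma pow_succ_le (b k : ℕ) : (b + 2) ^ (k + 1) ≤ b ^ (k + 1) + 2 * (k + 1) * (b + 2) ^ k := by
  induction k with
  | zero => ring_nf; omega
  | succ k ih =>
    have h1 : (b + 2) ^ (k + 2) = (b + 2) * (b + 2) ^ (k + 1) := by ring
    have h2 : b ^ (k+1) * (b+2) ≤ (b+2)^(k+1) * (b+2) :=
      Nat.mul_le_mul_right _ (Nat.pow_le_pow_left (by omega) _)
    calc (b + 2) ^ (k + 2) = (b + 2) ^ (k + 1) * (b + 2) := by ring
      _ ≤ (b ^ (k + 1) + 2 * (k + 1) * (b + 2) ^ k) * (b + 2) :=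
          Nat.mul_le_mul_right _ ih
      _ = b ^ (k+1) * (b+2) + 2 * (k + 1) * (b + 2) ^ (k+1) := by ring
      _ = b ^ (k+2) + 2 * b^(k+1) + 2 * (k + 1) * (b + 2) ^ (k+1) := by ring
      _ ≤ b ^ (k+2) + 2 * (b+2)^(k+1) + 2 * (k + 1) * (b + 2) ^ (k+1) := by
          have : b^(k+1) ≤ (b+2)^(k+1) := Nat.pow_le_pow_left (by omega) _
          omega
      _ = b ^ (k+2) + 2 * (k + 2) * (b + 2) ^ (k+1) := by ring

lemma card_shell (hd : 0 < d) {n : ℕ} (hn : 1 ≤ n) :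
    (ball d n \ ball d (n - 1)).card ≤ 2 * d * 3 ^ (d - 1) * n ^ (d - 1) := by
  have hsub : ball d (n - 1) ⊆ ball d n := by
    intro z hz; rw [mem_ball] at *; omega
  rw [Finset.card_sdiff_of_subset hsub, card_ball, card_ball]
  obtain ⟨k, rfl⟩ : ∃ k, d = k + 1 := ⟨d - 1, by omega⟩
  have hb : 2 * (n - 1) + 1 + 2 = 2 * n + 1 := by omega
  have := pow_succ_le (2 * (n - 1) + 1) k
  rw [hb] at this
  have h2 : (2 * n + 1) ^ (k + 1) - (2 * (n - 1) + 1) ^ (k + 1) ≤ 2 * (k + 1) * (2 * n + 1) ^ k := by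
    omega
  refine h2.trans ?_
  have h3 : (2 * n + 1) ^ k ≤ (3 * n) ^ k := Nat.pow_le_pow_left (by omega) _
  calc 2 * (k + 1) * (2 * n + 1) ^ k ≤ 2 * (k + 1) * (3 * n) ^ k :=
        Nat.mul_le_mul_left _ h3
    _ = 2 * (k + 1) * 3 ^ k * n ^ k := by rw [Nat.mul_pow]; ring
    _ = 2 * (k + 1) * 3 ^ (k + 1 - 1) * n ^ (k + 1 - 1) := by simp

/-- Fibers of `gn` over positive values are shells. -/
lemma fiber_eq_shell {n : ℕ} (hn : 1 ≤ n) :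
    gn ⁻¹' {n} = ((ball d n \ ball d (n - 1) : Finset (Fin d → ℤ)) : Set (Fin d → ℤ)) := by
  ext z
  simp only [Set.mem_preimage, Set.mem_singleton_iff, Finset.coe_sdiff, Set.mem_diff,
    Finset.mem_coe, mem_ball]
  omega

/-- Master counting bound: sum over the lattice of a function of the norm. -/
lemma master (hd : 0 < d) (f : ℕ → ℝ≥0∞) (hf0 : f 0 = 0) :
    ∑' z : Fin d → ℤ, f (gn z) ≤
      ∑' n : ℕ, ((2 * d * 3 ^ (d - 1) * n ^ (d - 1) : ℕ) : ℝ≥0∞) * f n := by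
  rw [← ENNReal.tsum_fiberwise (fun z => f (gn z)) gn]
  refine ENNReal.tsum_le_tsum fun n => ?_
  have hcongr : ∀ b : (gn ⁻¹' {n} : Set (Fin d → ℤ)), f (gn (b : Fin d → ℤ)) = f n := by
    rintro ⟨b, hb⟩; simp only [Set.mem_preimage, Set.mem_singleton_iff] at hb; rw [hb]
  rw [tsum_congr hcongr]
  rcases Nat.eq_zero_or_pos n with rfl | hn
  · simp [hf0]
  · rw [show (gn ⁻¹' {n} : Set (Fin d → ℤ)) =
        ((ball d n \ ball d (n - 1) : Finset (Fin d → ℤ)) : Set (Fin d → ℤ)) from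
      fiber_eq_shell hn]
    rw [Finset.tsum_subtype' (ball d n \ ball d (n - 1)) (fun _ => f n),
      Finset.sum_const, nsmul_eq_mul]
    exact mul_le_mul' (by exact_mod_cast Nat.cast_le.mpr (card_shell hd hn)) le_rfl

/-! ### Bernoulli-type inequalities -/

lemma bern1 {p : ℝ} (hp0 : 0 < p) (hp1 : p ≤ 1) {n : ℕ} (hn : 1 ≤ n) :
    p * (n : ℝ) ^ (p - 1) ≤ (n : ℝ) ^ p - ((n : ℝ) - 1) ^ p := by
  have hn0 : (0 : ℝ) < n := by exact_mod_cast hn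
  set u : ℝ := 1 / n with hu
  have hu0 : 0 < u := by positivity
  have hu1 : u ≤ 1 := by rw [hu]; rw [div_le_one hn0]; exact_mod_cast hn
  have h1u : (0 : ℝ) ≤ 1 - u := by linarith
  have key : (1 - u) ^ p ≤ 1 - p * u := by
    have h := Real.geom_mean_le_arith_mean2_weighted hp0.le (by linarith : (0:ℝ) ≤ 1 - p)
      h1u zero_le_one (by ring)
    rw [Real.one_rpow] at h
    calc (1 - u) ^ p = (1 - u) ^ p * 1 := by ring
      _ ≤ p * (1 - u) + (1 - p) * 1 := h
      _ = 1 - p * u := by ring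
  have hmul : ((n : ℝ) - 1) = (n : ℝ) * (1 - u) := by
    rw [hu]; field_simp
  have h2 : ((n : ℝ) - 1) ^ p ≤ (n : ℝ) ^ p * (1 - p * u) := by
    rw [hmul, Real.mul_rpow hn0.le h1u]
    exact mul_le_mul_of_nonneg_left key (Real.rpow_nonneg hn0.le _)
  have h3 : (n : ℝ) ^ p * u = (n : ℝ) ^ (p - 1) := by
    rw [Real.rpow_sub_one hn0.ne' p, hu]
    field_simp
  have h4 : (n : ℝ) ^ p * (1 - p * u) = (n:ℝ)^p - p * ((n:ℝ)^p * u) := by ring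
  rw [h4, h3] at h2
  linarith

lemma bern2 {q : ℝ} (hq : 0 < q) {n : ℕ} (hn : 2 ≤ n) :
    q * (n : ℝ) ^ (-q - 1) ≤ ((n : ℝ) - 1) ^ (-q) - (n : ℝ) ^ (-q) := by
  have hn0 : (0 : ℝ) < n := by positivity
  set u : ℝ := 1 / n with hu
  have hu0 : 0 < u := by positivity
  have hu1 : u < 1 := by
    rw [hu, div_lt_one hn0]
    exact_mod_cast (by omega : 1 < n)
  have h1u : (0 : ℝ) < 1 - u := by linarith
  have hw : 1 / (1 + q) + q / (1 + q) = 1 := by field_simp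
  have key0 : (1 + q * u) ^ (1 / (1 + q)) * (1 - u) ^ (q / (1 + q)) ≤ 1 := by
    have h := Real.geom_mean_le_arith_mean2_weighted (by positivity)
      (by positivity : (0:ℝ) ≤ q / (1 + q)) (by positivity : (0:ℝ) ≤ 1 + q * u) h1u.le hw
    refine h.trans_eq ?_
    field_simp
    ring
  have key : (1 + q * u) * (1 - u) ^ q ≤ 1 := by
    have hGnn : 0 ≤ (1 + q * u) ^ (1 / (1 + q)) * (1 - u) ^ (q / (1 + q)) := by positivity
    have h := Real.rpow_le_one hGnn key0 (by positivity : (0:ℝ) ≤ 1 + q)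
    rw [Real.mul_rpow (by positivity) (by positivity), ← Real.rpow_mul (by positivity),
      ← Real.rpow_mul h1u.le] at h
    rw [show 1 / (1 + q) * (1 + q) = 1 by field_simp, show q / (1 + q) * (1 + q) = q by field_simp,
      Real.rpow_one] at h
    exact h
  have hpow : (0 : ℝ) < (1 - u) ^ q := Real.rpow_pos_of_pos h1u _
  have key2 : 1 + q * u ≤ (1 - u) ^ (-q) := by
    rw [Real.rpow_neg h1u.le, inv_eq_one_div, le_div_iff₀ hpow]
    linarith [key]
  have hmul : ((n : ℝ) - 1) = (n : ℝ) * (1 - u) := by rw [hu]; field_simp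
  have h2 : (n : ℝ) ^ (-q) * (1 + q * u) ≤ ((n : ℝ) - 1) ^ (-q) := by
    rw [hmul, Real.mul_rpow hn0.le h1u.le]
    exact mul_le_mul_of_nonneg_left key2 (Real.rpow_nonneg hn0.le _)
  have h3 : (n : ℝ) ^ (-q) * u = (n : ℝ) ^ (-q - 1) := by
    rw [Real.rpow_sub_one hn0.ne' (-q), hu]
    field_simp
  have h4 : (n : ℝ) ^ (-q) * (1 + q * u) = (n:ℝ)^(-q) + q * ((n:ℝ)^(-q) * u) := by ring
  rw [h4, h3] at h2
  linarith

/-! ### Scalar sums -/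

lemma scalarA {s : ℝ} (hs : -1 < s) :
    ∃ C : ℝ, 0 < C ∧ ∀ R : ℕ, 1 ≤ R →
      ∑ n ∈ Finset.Icc 1 R, (n : ℝ) ^ s ≤ C * (R : ℝ) ^ (s + 1) := by
  have hp : 0 < s + 1 := by linarith
  refine ⟨1 + 1 / (s + 1), by positivity, fun R hR => ?_⟩
  have hR0 : (0 : ℝ) < R := by exact_mod_cast hR
  have hRp : 0 < (R : ℝ) ^ (s + 1) := Real.rpow_pos_of_pos hR0 _
  rcases le_or_gt 0 s with hs0 | hs0
  · have h1 : ∑ n ∈ Finset.Icc 1 R, (n : ℝ) ^ s ≤ ∑ _n ∈ Finset.Icc 1 R, (R : ℝ) ^ s := by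
      refine Finset.sum_le_sum fun n hn => ?_
      rw [Finset.mem_Icc] at hn
      exact Real.rpow_le_rpow (by positivity) (by exact_mod_cast hn.2) hs0
    rw [Finset.sum_const, Nat.card_Icc, nsmul_eq_mul] at h1
    have h2 : ((R + 1 - 1 : ℕ) : ℝ) * (R:ℝ) ^ s = (R:ℝ) ^ (s + 1) := by
      rw [Real.rpow_add_one hR0.ne']
      push_cast [Nat.add_sub_cancel]
      ring
    rw [h2] at h1
    nlinarith [mul_pos (div_pos one_pos hp) hRp]
  · -- telescoping
    have key : ∀ n ∈ Finset.Icc 1 R, (n : ℝ) ^ s ≤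
        (1 / (s + 1)) * ((n : ℝ) ^ (s + 1) - ((n : ℝ) - 1) ^ (s + 1)) := by
      intro n hn
      rw [Finset.mem_Icc] at hn
      have hb := bern1 hp (by linarith) hn.1
      rw [show s + 1 - 1 = s by ring] at hb
      calc (n:ℝ)^s = (1/(s+1)) * ((s+1) * (n:ℝ)^s) := by field_simp
        _ ≤ (1/(s+1)) * ((n:ℝ)^(s+1) - ((n:ℝ)-1)^(s+1)) :=
            mul_le_mul_of_nonneg_left hb (by positivity)
    have htel : ∑ n ∈ Finset.Icc 1 R, ((n : ℝ) ^ (s + 1) - ((n : ℝ) - 1) ^ (s + 1)) =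
        (R : ℝ) ^ (s + 1) := by
      have hmain : ∑ n ∈ Finset.Icc 1 R, ((n : ℝ) ^ (s + 1) - ((n : ℝ) - 1) ^ (s + 1)) =
          ((R:ℕ):ℝ) ^ (s+1) - ((0:ℕ):ℝ) ^ (s+1) := by
        rw [← Finset.Ico_add_one_right_eq_Icc, Finset.sum_Ico_eq_sum_range]
        refine (Finset.sum_congr rfl fun k _ => ?_).trans
          (Finset.sum_range_sub (fun i : ℕ => ((i:ℕ):ℝ) ^ (s+1)) (R + 1 - 1))
        show ((1+k:ℕ):ℝ)^(s+1) - (((1+k:ℕ):ℝ) - 1)^(s+1)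
            = ((k+1:ℕ):ℝ)^(s+1) - ((k:ℕ):ℝ)^(s+1)
        rw [show 1+k = k+1 from by omega,
          show (((k+1:ℕ)):ℝ) - 1 = ((k:ℕ):ℝ) from by push_cast; ring]
      rw [hmain, Nat.cast_zero, Real.zero_rpow hp.ne', sub_zero]
    calc ∑ n ∈ Finset.Icc 1 R, (n : ℝ) ^ s
        ≤ ∑ n ∈ Finset.Icc 1 R, (1 / (s + 1)) * ((n : ℝ) ^ (s + 1) - ((n : ℝ) - 1) ^ (s + 1)) :=
          Finset.sum_le_sum key
      _ = (1 / (s + 1)) * (R : ℝ) ^ (s + 1) := by rw [← Finset.mul_sum, htel]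
      _ ≤ (1 + 1 / (s + 1)) * (R : ℝ) ^ (s + 1) := by nlinarith

lemma tail_tsum {q : ℝ} (hq : 0 < q) {m : ℕ} (hm : 2 ≤ m) :
    ∑' n : ℕ, (if m ≤ n then ENNReal.ofReal ((n : ℝ) ^ (-q - 1)) else 0) ≤
      ENNReal.ofReal ((1 / q) * ((m - 1 : ℕ) : ℝ) ^ (-q)) := by
  refine ENNReal.tsum_le_of_sum_range_le fun N => ?_
  have hterm : ∀ n : ℕ, (if m ≤ n then ENNReal.ofReal ((n : ℝ) ^ (-q - 1)) else 0) =
      ENNReal.ofReal (if m ≤ n then (n : ℝ) ^ (-q - 1) else 0) := by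
    intro n; split_ifs <;> simp
  have hnn : ∀ n ∈ Finset.range N, (0:ℝ) ≤ (if m ≤ n then (n : ℝ) ^ (-q - 1) else 0) := by
    intro n _
    split_ifs with h
    · positivity
    · exact le_rfl
  rw [Finset.sum_congr rfl fun n _ => hterm n, ← ENNReal.ofReal_sum_of_nonneg hnn]
  refine ENNReal.ofReal_le_ofReal ?_
  have hfilter : (Finset.range N).filter (fun n => m ≤ n) = Finset.Ico m N := by
    ext n
    simp only [Finset.mem_filter, Finset.mem_range, Finset.mem_Ico]
    omega
  rw [← Finset.sum_filter, hfilter]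
  have key : ∀ n ∈ Finset.Ico m N, (n:ℝ)^(-q-1) ≤
      (1/q) * (((n-1:ℕ):ℝ)^(-q) - ((n:ℕ):ℝ)^(-q)) := by
    intro n hn
    rw [Finset.mem_Ico] at hn
    have h2n : 2 ≤ n := le_trans hm hn.1
    have hb := bern2 hq h2n
    have hcast : ((n:ℝ) - 1) = ((n-1:ℕ):ℝ) := by
      have : ((n-1:ℕ):ℝ) = (n:ℝ) - 1 := by
        push_cast [Nat.cast_sub (by omega : 1 ≤ n)]
        ring
      linarith
    rw [hcast] at hb
    calc (n:ℝ)^(-q-1) = (1/q) * (q * (n:ℝ)^(-q-1)) := by field_simp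
      _ ≤ (1/q) * (((n-1:ℕ):ℝ)^(-q) - ((n:ℕ):ℝ)^(-q)) :=
          mul_le_mul_of_nonneg_left hb (by positivity)
  refine (Finset.sum_le_sum key).trans ?_
  rw [← Finset.mul_sum]
  have htel : ∑ n ∈ Finset.Ico m N, (((n-1:ℕ):ℝ)^(-q) - ((n:ℕ):ℝ)^(-q)) ≤
      ((m-1:ℕ):ℝ)^(-q) := by
    have hmain : ∑ n ∈ Finset.Ico m N, (((n-1:ℕ):ℝ)^(-q) - ((n:ℕ):ℝ)^(-q)) =
        ((m-1:ℕ):ℝ)^(-q) - ((m-1+(N-m):ℕ):ℝ)^(-q) := by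
      rw [Finset.sum_Ico_eq_sum_range]
      refine (Finset.sum_congr rfl fun k _ => ?_).trans
        (Finset.sum_range_sub' (fun i : ℕ => ((m-1+i:ℕ):ℝ) ^ (-q)) (N - m))
      show ((m+k-1:ℕ):ℝ)^(-q) - ((m+k:ℕ):ℝ)^(-q)
          = ((m-1+k:ℕ):ℝ)^(-q) - ((m-1+(k+1):ℕ):ℝ)^(-q)
      rw [show m+k-1 = m-1+k from by omega, show m+k = m-1+(k+1) from by omega]
    rw [hmain]
    have h0 : (0:ℝ) ≤ ((m - 1 + (N - m):ℕ):ℝ)^(-q) := by positivity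
    linarith
  exact mul_le_mul_of_nonneg_left htel (by positivity)

lemma scalarB {s : ℝ} (hs : s < -1) :
    ∃ C : ℝ, 0 < C ∧ ∀ R : ℕ, 1 ≤ R →
      (∑' n : ℕ, if R < 2 * n then ENNReal.ofReal ((n : ℝ) ^ s) else 0) ≤
        ENNReal.ofReal (C * (R : ℝ) ^ (s + 1)) := by
  set q : ℝ := -(s+1) with hqdef
  have hq : 0 < q := by rw [hqdef]; linarith
  have hsq : s = -q - 1 := by rw [hqdef]; ring
  refine ⟨(1/q) * 4^q + (1 + 1/q), by positivity, fun R hR => ?_⟩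
  rcases eq_or_lt_of_le hR with hR1 | hR2
  · -- R = 1
    rw [← hR1]
    have hsplit : ∀ n : ℕ, (if (1:ℕ) < 2 * n then ENNReal.ofReal ((n : ℝ) ^ s) else 0) ≤
        (if n = 1 then ENNReal.ofReal ((1:ℝ)) else 0) +
        (if 2 ≤ n then ENNReal.ofReal ((n : ℝ) ^ s) else 0) := by
      intro n
      rcases Nat.lt_or_ge n 2 with h | h
      · interval_cases n <;> simp [Real.one_rpow]
      · have : ¬ (n = 1) := by omega
        simp only [if_pos (by omega : (1:ℕ) < 2*n), if_neg this, if_pos h, zero_add]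
        exact le_rfl
    refine (ENNReal.tsum_le_tsum hsplit).trans ?_
    rw [ENNReal.tsum_add]
    have h1 : (∑' n : ℕ, if n = 1 then ENNReal.ofReal ((1:ℝ)) else 0) =
        ENNReal.ofReal 1 := tsum_ite_eq 1 _
    have h2 : (∑' n : ℕ, if 2 ≤ n then ENNReal.ofReal ((n : ℝ) ^ s) else 0) ≤
        ENNReal.ofReal ((1/q) * ((2 - 1 : ℕ) : ℝ) ^ (-q)) := by
      have := tail_tsum hq (le_refl 2)
      rw [← hsq] at this
      exact this
    rw [h1]
    refine (add_le_add le_rfl h2).trans ?_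
    rw [← ENNReal.ofReal_add (by norm_num) (by positivity)]
    refine ENNReal.ofReal_le_ofReal ?_
    have : ((2 - 1 : ℕ) : ℝ) ^ (-q) = 1 := by norm_num
    rw [this]
    have h4 : (0:ℝ) < 4 ^ q := Real.rpow_pos_of_pos (by norm_num) _
    have : ((1:ℕ):ℝ) ^ (s+1) = 1 := by norm_num
    rw [this, mul_one]
    have : (0:ℝ) ≤ (1/q) * 4^q := by positivity
    linarith
  · -- R ≥ 2
    set m : ℕ := R / 2 + 1 with hmdef
    have hm : 2 ≤ m := by omega
    have hcond : ∀ n : ℕ, (R < 2 * n) ↔ (m ≤ n) := by intro n; omega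
    have heq : ∀ n : ℕ, (if R < 2 * n then ENNReal.ofReal ((n : ℝ) ^ s) else 0) =
        (if m ≤ n then ENNReal.ofReal ((n : ℝ) ^ (-q-1)) else 0) := by
      intro n
      rw [← hsq]
      simp only [hcond n]
    rw [tsum_congr heq]
    refine (tail_tsum hq hm).trans (ENNReal.ofReal_le_ofReal ?_)
    have hR0 : (0:ℝ) < R := by positivity
    have hm1 : ((m - 1:ℕ):ℝ) = (R/2 : ℕ) := by rw [hmdef]; norm_num
    have hge : (R:ℝ) / 4 ≤ ((R/2 : ℕ):ℝ) := by
      have : R ≤ 4 * (R/2) := by omega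
      have h4 : (R:ℝ) ≤ 4 * ((R/2:ℕ):ℝ) := by exact_mod_cast this
      linarith
    have hq4 : (0:ℝ) < (R:ℝ)/4 := by linarith
    have hmono : ((m - 1:ℕ):ℝ) ^ (-q) ≤ ((R:ℝ)/4) ^ (-q) := by
      rw [hm1]
      exact Real.rpow_le_rpow_of_nonpos hq4 hge (by linarith)
    have hsplitpow : ((R:ℝ)/4) ^ (-q) = 4^q * (R:ℝ)^(-q) := by
      rw [Real.div_rpow hR0.le (by norm_num), Real.rpow_neg hR0.le, Real.rpow_neg (by norm_num : (0:ℝ) ≤ 4)]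
      field_simp
    have hfin : (1/q) * ((m - 1:ℕ):ℝ) ^ (-q) ≤ (1/q) * 4^q * (R:ℝ)^(-q) := by
      rw [mul_assoc, ← hsplitpow]
      exact mul_le_mul_of_nonneg_left hmono (by positivity)
    refine hfin.trans ?_
    have hRq : (0:ℝ) ≤ (R:ℝ)^(-q) := by positivity
    have hs1 : (R:ℝ)^(s+1) = (R:ℝ)^(-q) := by rw [hqdef]; ring_nf
    rw [hs1]
    nlinarith [Real.rpow_pos_of_pos hR0 (-q), (by positivity : (0:ℝ) < 1 + 1/q)]


/-! ### Lattice sum bounds -/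

lemma latPow_eq {z : Fin d → ℤ} (hz : z ≠ 0) (a : ℝ) :
    latPow z a = ENNReal.ofReal (((gn z : ℕ) : ℝ) ^ a) := by
  rw [latPow, if_neg hz, norm_eq_gn]

lemma latPow_le (z : Fin d → ℤ) (a : ℝ) :
    latPow z a ≤ ENNReal.ofReal (((gn z : ℕ) : ℝ) ^ a) := by
  rcases eq_or_ne z 0 with rfl | hz
  · rw [latPow, if_pos rfl]; exact zero_le'
  · rw [latPow_eq hz]

lemma gn_pos {z : Fin d → ℤ} (hz : z ≠ 0) : 1 ≤ gn z := by
  rcases Nat.eq_zero_or_pos (gn z) with h | h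
  · exact absurd ((gn_eq_zero_iff z).mp h) hz
  · exact h

lemma sumA (hd : 0 < d) {a : ℝ} (had : -(d:ℝ) < a) (ha : a < 0) :
    ∃ C : ℝ, 0 < C ∧ ∀ R : ℕ, 1 ≤ R →
      (∑' w : Fin d → ℤ, if gn w ≤ R then latPow w a else 0) ≤
        ENNReal.ofReal (C * (R:ℝ) ^ (a + d)) := by
  set s : ℝ := (d:ℝ) - 1 + a with hsdef
  have hs : -1 < s := by rw [hsdef]; linarith
  obtain ⟨CA, hCA, hA⟩ := scalarA hs
  set K : ℕ := 2 * d * 3 ^ (d - 1) with hKdef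
  have hK : 0 < K := by positivity
  have hKR : (0:ℝ) < K := by exact_mod_cast hK
  refine ⟨(K:ℝ) * CA, by positivity, fun R hR => ?_⟩
  set f : ℕ → ℝ≥0∞ := fun n => if 1 ≤ n ∧ n ≤ R then ENNReal.ofReal ((n:ℝ)^a) else 0 with hf
  have hf0 : f 0 = 0 := by rw [hf]; simp
  have hpt : ∀ w : Fin d → ℤ, (if gn w ≤ R then latPow w a else 0) ≤ f (gn w) := by
    intro w
    rcases eq_or_ne w 0 with rfl | hw
    · rw [latPow, if_pos rfl]
      simp
    · have h1 : 1 ≤ gn w := gn_pos hw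
      by_cases hle : gn w ≤ R
      · rw [if_pos hle, hf, latPow_eq hw]
        simp only [if_pos (And.intro h1 hle)]
        exact le_rfl
      · rw [if_neg hle, hf]
        simp only
        rw [if_neg (by omega)]
  have step1 := (ENNReal.tsum_le_tsum hpt).trans (master hd f hf0)
  have hterm : ∀ n : ℕ, ((K * n ^ (d - 1) : ℕ) : ℝ≥0∞) * f n =
      (if 1 ≤ n ∧ n ≤ R then ENNReal.ofReal ((K:ℝ) * (n:ℝ) ^ s) else 0) := by
    intro n
    rw [hf]
    simp only
    by_cases hc : 1 ≤ n ∧ n ≤ R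
    · rw [if_pos hc, if_pos hc]
      have hn0 : (0:ℝ) < n := by exact_mod_cast hc.1
      rw [← ENNReal.ofReal_natCast (K * n ^ (d-1)), ← ENNReal.ofReal_mul (by positivity)]
      congr 1
      push_cast
      rw [mul_assoc, ← Real.rpow_natCast (n:ℝ) (d-1), ← Real.rpow_add hn0]
      congr 2
      rw [hsdef]
      have : ((d - 1 : ℕ) : ℝ) = (d:ℝ) - 1 := by
        rw [Nat.cast_sub hd]
        norm_num
      rw [this]
    · rw [if_neg hc, if_neg hc, mul_zero]
  rw [tsum_congr hterm] at step1
  have hfin : ∀ n : ℕ, n ∉ Finset.Icc 1 R →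
      (if 1 ≤ n ∧ n ≤ R then ENNReal.ofReal ((K:ℝ) * (n:ℝ) ^ s) else 0) = 0 := by
    intro n hn
    rw [Finset.mem_Icc] at hn
    rw [if_neg (by omega)]
  rw [tsum_eq_sum hfin] at step1
  have hsum : ∑ n ∈ Finset.Icc 1 R,
      (if 1 ≤ n ∧ n ≤ R then ENNReal.ofReal ((K:ℝ) * (n:ℝ) ^ s) else 0) =
      ENNReal.ofReal ((K:ℝ) * ∑ n ∈ Finset.Icc 1 R, (n:ℝ) ^ s) := by
    rw [Finset.mul_sum, ENNReal.ofReal_sum_of_nonneg (fun n hn => by positivity)]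
    refine Finset.sum_congr rfl fun n hn => ?_
    rw [Finset.mem_Icc] at hn
    rw [if_pos (by omega)]
  rw [hsum] at step1
  refine step1.trans (ENNReal.ofReal_le_ofReal ?_)
  have hAB := hA R hR
  have hexp : s + 1 = a + d := by rw [hsdef]; ring
  rw [hexp] at hAB
  calc (K:ℝ) * ∑ n ∈ Finset.Icc 1 R, (n:ℝ) ^ s ≤ (K:ℝ) * (CA * (R:ℝ)^(a+d)) :=
        mul_le_mul_of_nonneg_left hAB hKR.le
    _ = (K:ℝ) * CA * (R:ℝ)^(a+d) := by ring

lemma sumB (hd : 0 < d) {a : ℝ} (had : a + d < 0) :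
    ∃ C : ℝ, 0 < C ∧ ∀ R : ℕ, 1 ≤ R →
      (∑' w : Fin d → ℤ, if R < 2 * gn w then latPow w a else 0) ≤
        ENNReal.ofReal (C * (R:ℝ) ^ (a + d)) := by
  set s : ℝ := (d:ℝ) - 1 + a with hsdef
  have hs : s < -1 := by rw [hsdef]; linarith
  obtain ⟨CB, hCB, hB⟩ := scalarB hs
  set K : ℕ := 2 * d * 3 ^ (d - 1) with hKdef
  have hK : 0 < K := by positivity
  have hKR : (0:ℝ) < K := by exact_mod_cast hK
  refine ⟨(K:ℝ) * CB, by positivity, fun R hR => ?_⟩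
  set f : ℕ → ℝ≥0∞ := fun n => if R < 2 * n then ENNReal.ofReal ((n:ℝ)^a) else 0 with hf
  have hf0 : f 0 = 0 := by rw [hf]; simp
  have hpt : ∀ w : Fin d → ℤ, (if R < 2 * gn w then latPow w a else 0) ≤ f (gn w) := by
    intro w
    rw [hf]
    simp only
    by_cases hc : R < 2 * gn w
    · rw [if_pos hc, if_pos hc]
      have hw : w ≠ 0 := by
        intro h
        subst h
        rw [(gn_eq_zero_iff (0 : Fin d → ℤ)).mpr rfl] at hc
        omega
      rw [latPow_eq hw]
    · rw [if_neg hc, if_neg hc]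
  have step1 := (ENNReal.tsum_le_tsum hpt).trans (master hd f hf0)
  have hterm : ∀ n : ℕ, ((K * n ^ (d - 1) : ℕ) : ℝ≥0∞) * f n =
      ENNReal.ofReal ((K:ℝ)) * (if R < 2 * n then ENNReal.ofReal ((n:ℝ) ^ s) else 0) := by
    intro n
    rw [hf]
    simp only
    by_cases hc : R < 2 * n
    · rw [if_pos hc, if_pos hc]
      have hn1 : 1 ≤ n := by omega
      have hn0 : (0:ℝ) < n := by exact_mod_cast hn1
      rw [← ENNReal.ofReal_natCast (K * n ^ (d-1)), ← ENNReal.ofReal_mul (by positivity),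
        ← ENNReal.ofReal_mul (by positivity)]
      congr 1
      push_cast
      rw [mul_assoc, ← Real.rpow_natCast (n:ℝ) (d-1), ← Real.rpow_add hn0]
      congr 2
      rw [hsdef, Nat.cast_sub hd]
      norm_num
    · rw [if_neg hc, if_neg hc, mul_zero, mul_zero]
  rw [tsum_congr hterm, ENNReal.tsum_mul_left] at step1
  refine step1.trans ?_
  have hBB := hB R hR
  have hexp : s + 1 = a + d := by rw [hsdef]; ring
  rw [hexp] at hBB
  calc ENNReal.ofReal ((K:ℝ)) * (∑' n : ℕ, if R < 2*n then ENNReal.ofReal ((n:ℝ)^s) else 0)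
      ≤ ENNReal.ofReal ((K:ℝ)) * ENNReal.ofReal (CB * (R:ℝ)^(a+d)) :=
        mul_le_mul' le_rfl hBB
    _ = ENNReal.ofReal ((K:ℝ) * CB * (R:ℝ)^(a+d)) := by
        rw [← ENNReal.ofReal_mul hKR.le, mul_assoc]

end LatAux

theorem statement0 (d : ℕ) (hd : 6 < d) (α₁ α₂ : ℝ)
    (h₁ : -(d : ℝ) < α₁) (h₂ : -(d : ℝ) < α₂) (h₃ : α₁ + α₂ + d < 0) :
    ∃ C : ℝ, 0 < C ∧ ∀ x y : Fin d → ℤ, x ≠ y →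
      ∑' z : Fin d → ℤ, latPow (z - x) α₁ * latPow (z - y) α₂ ≤
        ENNReal.ofReal (C * ‖x - y‖ ^ (α₁ + α₂ + d)) := by
  have hd0 : 0 < d := by omega
  have ha1 : α₁ < 0 := by linarith
  have ha2 : α₂ < 0 := by linarith
  obtain ⟨C₁, hC₁, hA1⟩ := LatAux.sumA hd0 h₁ ha1
  obtain ⟨C₂, hC₂, hA2⟩ := LatAux.sumA hd0 h₂ ha2
  obtain ⟨C₃, hC₃, hB3⟩ := LatAux.sumB hd0 (show (α₁ + α₂) + (d:ℝ) < 0 by linarith)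
  refine ⟨2^(-α₂) * C₁ + 2^(-α₁) * C₂ + 4^(-α₂) * C₃, by positivity, fun x y hxy => ?_⟩
  set R : ℕ := LatAux.gn (x - y) with hRdef
  have hxy0 : x - y ≠ 0 := sub_ne_zero.mpr hxy
  have hR : 1 ≤ R := LatAux.gn_pos hxy0
  have hR0 : (0:ℝ) < R := by exact_mod_cast hR
  have hnorm : ‖x - y‖ = (R:ℝ) := LatAux.norm_eq_gn _
  set cA : ℝ := 2^(-α₂) * (R:ℝ)^α₂ with hcA
  set cB : ℝ := 2^(-α₁) * (R:ℝ)^α₁ with hcB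
  set cC : ℝ := 4^(-α₂) with hcC
  have hcA0 : 0 ≤ cA := by rw [hcA]; positivity
  have hcB0 : 0 ≤ cB := by rw [hcB]; positivity
  have hcC0 : 0 ≤ cC := by rw [hcC]; positivity
  have hpt : ∀ z : Fin d → ℤ,
      latPow (z - x) α₁ * latPow (z - y) α₂ ≤
        ENNReal.ofReal cA * (if LatAux.gn (z - x) ≤ R then latPow (z - x) α₁ else 0)
        + (ENNReal.ofReal cB * (if LatAux.gn (z - y) ≤ R then latPow (z - y) α₂ else 0)
        + ENNReal.ofReal cC *
            (if R < 2 * LatAux.gn (z - x) then latPow (z - x) (α₁ + α₂) else 0)) := by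
    intro z
    have e1 : LatAux.gn (x - z) = LatAux.gn (z - x) := by
      rw [show x - z = -(z - x) from (neg_sub z x).symm, LatAux.gn_neg]
    have e2 : LatAux.gn (y - x) = R := by
      rw [show y - x = -(x - y) from (neg_sub x y).symm, LatAux.gn_neg]
    have htri : R ≤ LatAux.gn (z - x) + LatAux.gn (z - y) := by
      have h := LatAux.gn_triangle x y z
      omega
    have htri2 : LatAux.gn (z - x) ≤ LatAux.gn (z - y) + R := by
      have h := LatAux.gn_triangle z x y
      omega
    by_cases hA : 2 * LatAux.gn (z - x) ≤ R
    · have hg1R : LatAux.gn (z - x) ≤ R := by omega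
      have h2g2 : R ≤ 2 * LatAux.gn (z - y) := by omega
      have hzy : (R:ℝ)/2 ≤ ((LatAux.gn (z - y) : ℕ):ℝ) := by
        have : (R:ℝ) ≤ 2 * ((LatAux.gn (z - y) : ℕ):ℝ) := by exact_mod_cast h2g2
        linarith
      have hlp : latPow (z - y) α₂ ≤ ENNReal.ofReal cA := by
        refine (LatAux.latPow_le _ _).trans (ENNReal.ofReal_le_ofReal ?_)
        have hh : ((LatAux.gn (z - y) : ℕ):ℝ)^α₂ ≤ ((R:ℝ)/2)^α₂ :=
          Real.rpow_le_rpow_of_nonpos (by positivity) hzy ha2.le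
        refine hh.trans_eq ?_
        rw [hcA, Real.div_rpow hR0.le (by norm_num),
          Real.rpow_neg (by norm_num : (0:ℝ) ≤ 2), div_eq_mul_inv, mul_comm]
      calc latPow (z - x) α₁ * latPow (z - y) α₂
          ≤ latPow (z - x) α₁ * ENNReal.ofReal cA := mul_le_mul' le_rfl hlp
        _ = ENNReal.ofReal cA * (if LatAux.gn (z - x) ≤ R then latPow (z - x) α₁ else 0) := by
            rw [if_pos hg1R, mul_comm]
        _ ≤ _ := self_le_add_right _ _
    · by_cases hB : 2 * LatAux.gn (z - y) ≤ R
      · have hg2R : LatAux.gn (z - y) ≤ R := by omega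
        have h2g1 : R ≤ 2 * LatAux.gn (z - x) := by omega
        have hzx : (R:ℝ)/2 ≤ ((LatAux.gn (z - x) : ℕ):ℝ) := by
          have : (R:ℝ) ≤ 2 * ((LatAux.gn (z - x) : ℕ):ℝ) := by exact_mod_cast h2g1
          linarith
        have hlp : latPow (z - x) α₁ ≤ ENNReal.ofReal cB := by
          refine (LatAux.latPow_le _ _).trans (ENNReal.ofReal_le_ofReal ?_)
          have hh : ((LatAux.gn (z - x) : ℕ):ℝ)^α₁ ≤ ((R:ℝ)/2)^α₁ :=
            Real.rpow_le_rpow_of_nonpos (by positivity) hzx ha1.le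
          refine hh.trans_eq ?_
          rw [hcB, Real.div_rpow hR0.le (by norm_num),
            Real.rpow_neg (by norm_num : (0:ℝ) ≤ 2), div_eq_mul_inv, mul_comm]
        refine le_trans ?_ (le_add_self)
        refine le_trans ?_ (self_le_add_right _ _)
        calc latPow (z - x) α₁ * latPow (z - y) α₂
            ≤ ENNReal.ofReal cB * latPow (z - y) α₂ := mul_le_mul' hlp le_rfl
          _ = ENNReal.ofReal cB * (if LatAux.gn (z - y) ≤ R then latPow (z - y) α₂ else 0) := by
              rw [if_pos hg2R]
      · push_neg at hA hB
        have hg1pos : 1 ≤ LatAux.gn (z - x) := by omega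
        have hzx0 : z - x ≠ 0 := by
          intro h
          rw [h, (LatAux.gn_eq_zero_iff (0 : Fin d → ℤ)).mpr rfl] at hA
          omega
        have hg1R : (0:ℝ) < ((LatAux.gn (z - x) : ℕ):ℝ) := by exact_mod_cast hg1pos
        have hquad : ((LatAux.gn (z - x) : ℕ):ℝ)/4 ≤ ((LatAux.gn (z - y) : ℕ):ℝ) := by
          have hnat : LatAux.gn (z - x) ≤ 4 * LatAux.gn (z - y) := by omega
          have : ((LatAux.gn (z - x) : ℕ):ℝ) ≤ 4 * ((LatAux.gn (z - y) : ℕ):ℝ) := by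
            exact_mod_cast hnat
          linarith
        have hlp2 : latPow (z - y) α₂ ≤
            ENNReal.ofReal (cC * ((LatAux.gn (z - x) : ℕ):ℝ)^α₂) := by
          refine (LatAux.latPow_le _ _).trans (ENNReal.ofReal_le_ofReal ?_)
          have hh : ((LatAux.gn (z - y) : ℕ):ℝ)^α₂ ≤ (((LatAux.gn (z - x) : ℕ):ℝ)/4)^α₂ :=
            Real.rpow_le_rpow_of_nonpos (by positivity) hquad ha2.le
          refine hh.trans_eq ?_
          rw [hcC, Real.div_rpow hg1R.le (by norm_num),
            Real.rpow_neg (by norm_num : (0:ℝ) ≤ 4), div_eq_mul_inv, mul_comm]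
        refine le_trans ?_ (le_add_self)
        refine le_trans ?_ (le_add_self)
        calc latPow (z - x) α₁ * latPow (z - y) α₂
            = ENNReal.ofReal (((LatAux.gn (z - x) : ℕ):ℝ)^α₁) * latPow (z - y) α₂ := by
              rw [LatAux.latPow_eq hzx0]
          _ ≤ ENNReal.ofReal (((LatAux.gn (z - x) : ℕ):ℝ)^α₁) *
                ENNReal.ofReal (cC * ((LatAux.gn (z - x) : ℕ):ℝ)^α₂) := mul_le_mul' le_rfl hlp2
          _ = ENNReal.ofReal cC * ENNReal.ofReal
                (((LatAux.gn (z - x) : ℕ):ℝ)^α₁ * ((LatAux.gn (z - x) : ℕ):ℝ)^α₂) := by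
              rw [← ENNReal.ofReal_mul (by positivity), ← ENNReal.ofReal_mul hcC0]
              congr 1
              ring
          _ = ENNReal.ofReal cC *
                (if R < 2 * LatAux.gn (z - x) then latPow (z - x) (α₁ + α₂) else 0) := by
              rw [if_pos hA, LatAux.latPow_eq hzx0, ← Real.rpow_add hg1R]
  refine (ENNReal.tsum_le_tsum hpt).trans ?_
  rw [ENNReal.tsum_add, ENNReal.tsum_add]
  have hSA : (∑' z : Fin d → ℤ, ENNReal.ofReal cA *
      (if LatAux.gn (z - x) ≤ R then latPow (z - x) α₁ else 0)) ≤
      ENNReal.ofReal (cA * (C₁ * (R:ℝ)^(α₁ + d))) := by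
    rw [ENNReal.tsum_mul_left]
    have htr := Equiv.tsum_eq (Equiv.subRight x)
      (fun w => if LatAux.gn w ≤ R then latPow w α₁ else 0)
    simp only [Equiv.subRight_apply] at htr
    rw [htr, ENNReal.ofReal_mul hcA0]
    exact mul_le_mul' le_rfl (hA1 R hR)
  have hSB : (∑' z : Fin d → ℤ, ENNReal.ofReal cB *
      (if LatAux.gn (z - y) ≤ R then latPow (z - y) α₂ else 0)) ≤
      ENNReal.ofReal (cB * (C₂ * (R:ℝ)^(α₂ + d))) := by
    rw [ENNReal.tsum_mul_left]
    have htr := Equiv.tsum_eq (Equiv.subRight y)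
      (fun w => if LatAux.gn w ≤ R then latPow w α₂ else 0)
    simp only [Equiv.subRight_apply] at htr
    rw [htr, ENNReal.ofReal_mul hcB0]
    exact mul_le_mul' le_rfl (hA2 R hR)
  have hSC : (∑' z : Fin d → ℤ, ENNReal.ofReal cC *
      (if R < 2 * LatAux.gn (z - x) then latPow (z - x) (α₁ + α₂) else 0)) ≤
      ENNReal.ofReal (cC * (C₃ * (R:ℝ)^((α₁ + α₂) + d))) := by
    rw [ENNReal.tsum_mul_left]
    have htr := Equiv.tsum_eq (Equiv.subRight x)
      (fun w => if R < 2 * LatAux.gn w then latPow w (α₁ + α₂) else 0)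
    simp only [Equiv.subRight_apply] at htr
    rw [htr, ENNReal.ofReal_mul hcC0]
    exact mul_le_mul' le_rfl (hB3 R hR)
  refine (add_le_add hSA (add_le_add hSB hSC)).trans ?_
  rw [← ENNReal.ofReal_add (by positivity) (by positivity),
    ← ENNReal.ofReal_add (by positivity) (by positivity)]
  refine ENNReal.ofReal_le_ofReal (le_of_eq ?_)
  rw [hnorm, hcA, hcB, hcC,
    Real.rpow_add hR0 (α₁ + α₂) (d:ℝ), Real.rpow_add hR0 α₁ α₂,
    Real.rpow_add hR0 α₁ (d:ℝ), Real.rpow_add hR0 α₂ (d:ℝ)]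
  ring
end

section
/- Let d > 6 be an integer. There exists a constant C = C(d) > 0 such that for all x, y ∈ ℤ^d with x ≠ y, one has ∑_{z₁, z₂ ∈ ℤ^d} |x − z₁|^{2−d} |z₁ − z₂|^{2−d} |z₂ − y|^{2−d} ≤ C |x − y|^{6−d}, where terms in which any of x − z₁, z₁ − z₂, z₂ − y vanishes are omitted from the sum. -/
open scoped ENNReal

open scoped NNReal

namespace LatAux
variable {d : ℕ}

def nu (z : Fin d → ℤ) : ℕ := Finset.univ.sup fun i => (z i).natAbs



lemma nnnorm_eq_nu (z : Fin d → ℤ) : ‖z‖₊ = (nu z : ℝ≥0) := by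
  rw [Pi.nnnorm_def, nu]
  rw [Finset.comp_sup_eq_sup_comp (fun n : ℕ => (n : ℝ≥0))
    (fun a b => by simp [Nat.cast_max]) (by simp)]
  simp [Function.comp, ← NNReal.natCast_natAbs]
  rfl

lemma norm_eq_nu (z : Fin d → ℤ) : ‖z‖ = (nu z : ℝ) := by
  rw [← coe_nnnorm, nnnorm_eq_nu]; simp

lemma nu_eq_zero {z : Fin d → ℤ} : nu z = 0 ↔ z = 0 := by
  constructor
  · intro h
    funext i
    have := Finset.sup_le_iff.mp h.le i (Finset.mem_univ i)
    simpa [Int.natAbs_eq_zero] using this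
  · rintro rfl; simp [nu]

lemma nu_neg (z : Fin d → ℤ) : nu (-z) = nu z := by simp [nu]

lemma nu_triangle (a b : Fin d → ℤ) : nu (a + b) ≤ nu a + nu b := by
  have := norm_add_le a b
  rw [norm_eq_nu, norm_eq_nu, norm_eq_nu] at this
  exact_mod_cast this

lemma nu_sub_le (a b c : Fin d → ℤ) : nu (a - c) ≤ nu (a - b) + nu (b - c) := by
  have : a - c = (a - b) + (b - c) := by ring
  rw [this]; exact nu_triangle _ _




noncomputable def box (d n : ℕ) : Finset (Fin d → ℤ) := Finset.Icc (fun _ => -(n:ℤ)) (fun _ => (n:ℤ))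

lemma mem_box {n : ℕ} {z : Fin d → ℤ} : z ∈ box d n ↔ nu z ≤ n := by
  simp only [box, Finset.mem_Icc, nu, Finset.sup_le_iff, Finset.mem_univ, true_implies,
    Pi.le_def]
  constructor
  · rintro ⟨h1, h2⟩ i
    have := h1 i; have := h2 i
    omega
  · intro h
    refine ⟨fun i => ?_, fun i => ?_⟩ <;> · have := h i; omega

lemma card_box (n : ℕ) : (box d n).card = (2*n+1)^d := by
  rw [box, Pi.card_Icc]
  have : ∀ i : Fin d, (Finset.Icc (-(n:ℤ)) (n:ℤ)).card = 2*n+1 := by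
    intro i; rw [Int.card_Icc]; omega
  rw [Finset.prod_congr rfl (fun i _ => this i)]
  simp

lemma pow_add_le (b c : ℕ) : ∀ k : ℕ, (b+c)^k ≤ b^k + c*k*(b+c)^(k-1)
  | 0 => by simp
  | 1 => by simp
  | (k+2) => by
    have ih := pow_add_le b c (k+1)
    have h1 : (b+c)^(k+2) = (b+c) * (b+c)^(k+1) := by ring
    have h2 : (b+c)^(k+1) = (b+c) * (b+c)^k := by ring
    have h3 : b^(k+1) ≤ (b+c)^(k+1) := Nat.pow_le_pow_left (by omega) _
    calc (b+c)^(k+2) = (b+c) * (b+c)^(k+1) := h1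
    _ ≤ (b+c) * (b^(k+1) + c*(k+1)*(b+c)^k) := by
        gcongr
        simpa using ih
    _ = b * b^(k+1) + c * b^(k+1) + c*(k+1)*((b+c)*(b+c)^k) := by ring
    _ ≤ b^(k+2) + c * (b+c)^(k+1) + c*(k+1)*(b+c)^(k+1) := by
        rw [← h2]
        have : b * b^(k+1) = b^(k+2) := by ring
        rw [this]
        gcongr
    _ = b^(k+2) + c*(k+2)*(b+c)^((k+2)-1) := by
        have : (k+2)-1 = k+1 := by omega
        rw [this]; ring

noncomputable def shell (d n : ℕ) : Finset (Fin d → ℤ) := box d n \ box d (n-1)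

lemma mem_shell {n : ℕ} (hn : 1 ≤ n) {z : Fin d → ℤ} : z ∈ shell d n ↔ nu z = n := by
  simp only [shell, Finset.mem_sdiff, mem_box]
  omega

lemma card_shell_le {n : ℕ} (hn : 1 ≤ n) :
    (shell d n).card ≤ 2*d*3^(d-1)*n^(d-1) := by
  have hsub : box d (n-1) ⊆ box d n := by
    intro z hz; rw [mem_box] at *; omega
  rw [shell, Finset.card_sdiff_of_subset hsub, card_box, card_box]
  have he : 2*n+1 = (2*(n-1)+1) + 2 := by omega
  have := pow_add_le (2*(n-1)+1) 2 d
  rw [← he] at this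
  have h2 : (2*n+1)^d - (2*(n-1)+1)^d ≤ 2*d*(2*n+1)^(d-1) := by omega
  calc (2*n+1)^d - (2*(n-1)+1)^d ≤ 2*d*(2*n+1)^(d-1) := h2
  _ ≤ 2*d*(3*n)^(d-1) := by gcongr; omega
  _ = 2*d*3^(d-1)*n^(d-1) := by rw [mul_pow]; ring




lemma tsum_nu_fibers (f : (Fin d → ℤ) → ℝ≥0∞) :
    ∑' z, f z = ∑' (n : ℕ), ∑' (z : {z : Fin d → ℤ // nu z = n}), f z.val := by
  rw [← (Equiv.sigmaFiberEquiv (nu : (Fin d → ℤ) → ℕ)).tsum_eq f]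
  exact ENNReal.tsum_sigma (fun n (z : {z : Fin d → ℤ // nu z = n}) => f z.val)

lemma tsum_subtype_le (p : (Fin d → ℤ) → Prop) (f : (Fin d → ℤ) → ℝ≥0∞)
    (s : Finset (Fin d → ℤ)) (hs : ∀ z, p z → z ∈ s) (c : ℝ≥0∞)
    (hc : ∀ z, p z → f z ≤ c) :
    ∑' (z : {z // p z}), f z.val ≤ s.card * c := by
  rw [ENNReal.tsum_eq_iSup_sum]
  refine iSup_le fun F => ?_
  calc ∑ z ∈ F, f z.val ≤ ∑ _z ∈ F, c := Finset.sum_le_sum fun z _ => hc z.val z.2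
  _ = F.card * c := by rw [Finset.sum_const, nsmul_eq_mul]
  _ ≤ s.card * c := by
      have hcard : F.card ≤ s.card := Finset.card_le_card_of_injOn Subtype.val
        (fun z _ => hs z.val z.2) (Subtype.val_injective.injOn)
      exact mul_le_mul_left (by exact_mod_cast Nat.cast_le.mpr hcard) c


noncomputable def Wn (m : ℕ) (z : Fin d → ℤ) : ℝ≥0∞ :=
  if z = 0 then 0 else ((nu z : ℝ≥0∞)^m)⁻¹

lemma Wn_le (m : ℕ) (z : Fin d → ℤ) : Wn m z ≤ ((nu z : ℝ≥0∞)^m)⁻¹ := by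
  rw [Wn]; split <;> simp

lemma natCast_pow_ne_top (n m : ℕ) : ((n : ℝ≥0∞)^m) ≠ ⊤ := by
  exact ENNReal.pow_ne_top (ENNReal.natCast_ne_top n)

/-- master shell bound -/
lemma tsum_le_shell_bound (f : (Fin d → ℤ) → ℝ≥0∞) (c : ℕ → ℝ≥0∞)
    (hf0 : f 0 = 0) (hf : ∀ z, z ≠ 0 → f z ≤ c (nu z)) :
    ∑' z, f z ≤ ∑' n : ℕ, ((2*d*3^(d-1)*n^(d-1) : ℕ) : ℝ≥0∞) * c n := by
  rw [tsum_nu_fibers]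
  refine ENNReal.tsum_le_tsum fun n => ?_
  rcases Nat.eq_zero_or_pos n with rfl | hn
  · have : ∀ z : {z : Fin d → ℤ // nu z = 0}, f z.val = 0 := by
      rintro ⟨z, hz⟩
      simp [nu_eq_zero.mp hz, hf0]
    rw [ENNReal.tsum_eq_zero.mpr this]
    exact zero_le
  · calc ∑' (z : {z : Fin d → ℤ // nu z = n}), f z.val
        ≤ (shell d n).card * c n := by
          refine tsum_subtype_le _ _ _ (fun z hz => (mem_shell hn).mpr hz) _ ?_
          intro z hz
          have hz0 : z ≠ 0 := by
            intro h; rw [h] at hz; simp [nu_eq_zero.mpr rfl] at hz; omega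
          rw [← hz]; exact hf z hz0
    _ ≤ ((2*d*3^(d-1)*n^(d-1) : ℕ) : ℝ≥0∞) * c n := by
          exact mul_le_mul_left (Nat.cast_le.mpr (card_shell_le hn)) _

lemma pow_mul_pow_inv_le {n R : ℕ} (hn : 1 ≤ n) (hnR : n ≤ R) {a b : ℕ} (hab : a ≤ b) :
    (n:ℝ≥0∞)^b * ((n:ℝ≥0∞)^a)⁻¹ ≤ (R:ℝ≥0∞)^(b-a) := by
  have hne : (n:ℝ≥0∞)^a ≠ 0 := by
    apply pow_ne_zero; exact_mod_cast Nat.cast_ne_zero.mpr (by omega)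
  have hnt : (n:ℝ≥0∞)^a ≠ ⊤ := natCast_pow_ne_top n a
  have hb : b = (b-a) + a := by omega
  calc (n:ℝ≥0∞)^b * ((n:ℝ≥0∞)^a)⁻¹ = (n:ℝ≥0∞)^(b-a) * ((n:ℝ≥0∞)^a * ((n:ℝ≥0∞)^a)⁻¹) := by
        conv_lhs => rw [hb]
        rw [pow_add, mul_assoc]
  _ = (n:ℝ≥0∞)^(b-a) := by rw [ENNReal.mul_inv_cancel hne hnt, mul_one]
  _ ≤ (R:ℝ≥0∞)^(b-a) := by
        gcongr



lemma ball_sum_le (a R : ℕ) (ha : a + 1 ≤ d) (hR : 1 ≤ R) :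
    ∑' z : Fin d → ℤ, (if nu z ≤ R then Wn a z else 0) ≤
      ((4*d*3^(d-1) : ℕ) : ℝ≥0∞) * (R:ℝ≥0∞)^(d-a) := by
  have step := tsum_le_shell_bound (fun z : Fin d → ℤ => if nu z ≤ R then Wn a z else 0)
    (fun n => if 1 ≤ n ∧ n ≤ R then ((n:ℝ≥0∞)^a)⁻¹ else 0)
    (by simp [Wn]) ?_
  · refine step.trans ?_
    have hsupp : ∀ n ∉ Finset.range (R+1),
        ((2*d*3^(d-1)*n^(d-1) : ℕ) : ℝ≥0∞) *
          (if 1 ≤ n ∧ n ≤ R then ((n:ℝ≥0∞)^a)⁻¹ else 0) = 0 := by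
      intro n hn
      rw [Finset.mem_range] at hn
      rw [if_neg (by omega), mul_zero]
    rw [tsum_eq_sum hsupp]
    have hterm : ∀ n ∈ Finset.range (R+1),
        ((2*d*3^(d-1)*n^(d-1) : ℕ) : ℝ≥0∞) *
          (if 1 ≤ n ∧ n ≤ R then ((n:ℝ≥0∞)^a)⁻¹ else 0) ≤
        ((2*d*3^(d-1) : ℕ) : ℝ≥0∞) * (R:ℝ≥0∞)^(d-1-a) := by
      intro n _
      rcases Nat.eq_zero_or_pos n with rfl | hn
      · rw [if_neg (by omega), mul_zero]; exact zero_le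
      by_cases hnR : n ≤ R
      · rw [if_pos ⟨hn, hnR⟩]
        have hc : ((2*d*3^(d-1)*n^(d-1) : ℕ) : ℝ≥0∞) =
            ((2*d*3^(d-1) : ℕ) : ℝ≥0∞) * (n:ℝ≥0∞)^(d-1) := by push_cast; ring
        rw [hc, mul_assoc]
        exact mul_le_mul_right (pow_mul_pow_inv_le hn hnR (by omega)) _
      · rw [if_neg (by omega), mul_zero]; exact zero_le
    calc ∑ n ∈ Finset.range (R+1), _ ≤
        ∑ _n ∈ Finset.range (R+1), ((2*d*3^(d-1) : ℕ) : ℝ≥0∞) * (R:ℝ≥0∞)^(d-1-a) :=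
          Finset.sum_le_sum hterm
    _ = ((R+1 : ℕ) : ℝ≥0∞) * (((2*d*3^(d-1) : ℕ) : ℝ≥0∞) * (R:ℝ≥0∞)^(d-1-a)) := by
          rw [Finset.sum_const, Finset.card_range, nsmul_eq_mul]
    _ ≤ ((2*R : ℕ) : ℝ≥0∞) * (((2*d*3^(d-1) : ℕ) : ℝ≥0∞) * (R:ℝ≥0∞)^(d-1-a)) := by
          have h2 : R+1 ≤ 2*R := by omega
          exact mul_le_mul_left (by exact_mod_cast h2) _
    _ = ((4*d*3^(d-1) : ℕ) : ℝ≥0∞) * ((R:ℝ≥0∞) * (R:ℝ≥0∞)^(d-1-a)) := by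
          push_cast; ring
    _ = ((4*d*3^(d-1) : ℕ) : ℝ≥0∞) * (R:ℝ≥0∞)^(d-a) := by
          rw [← pow_succ']
          congr 2
          omega
  · intro z hz
    show (if nu z ≤ R then Wn a z else 0) ≤
      (if 1 ≤ nu z ∧ nu z ≤ R then ((nu z : ℝ≥0∞)^a)⁻¹ else 0)
    by_cases h : nu z ≤ R
    · have h1 : 1 ≤ nu z := Nat.pos_of_ne_zero (fun h0 => hz (nu_eq_zero.mp h0))
      rw [if_pos h, if_pos ⟨h1, h⟩]
      exact Wn_le a z
    · rw [if_neg h]; exact zero_le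

lemma real_sq_sum (Q : ℕ) (hQ : 1 ≤ Q) :
    ∀ N : ℕ, ∑ n ∈ Finset.Icc Q (Q+N), ((n:ℝ)^2)⁻¹ ≤ 2/(Q:ℝ) - 1/((Q+N:ℕ):ℝ)
  | 0 => by
    simp only [Nat.add_zero, Finset.Icc_self, Finset.sum_singleton]
    have hq : (1:ℝ) ≤ Q := by exact_mod_cast hQ
    have hq0 : (0:ℝ) < Q := by linarith
    have e1 : 2/(Q:ℝ) - 1/(Q:ℝ) = ((Q:ℝ))⁻¹ := by field_simp; ring
    rw [e1]
    exact inv_anti₀ hq0 (by nlinarith)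
  | (N+1) => by
    have ih := real_sq_sum Q hQ N
    have hQN : (1:ℝ) ≤ ((Q+N:ℕ):ℝ) := by exact_mod_cast (by omega : 1 ≤ Q+N)
    have h1 : Q + (N+1) = (Q+N) + 1 := by omega
    rw [h1, Finset.sum_Icc_succ_top (by omega : Q ≤ Q+N+1)]
    set m : ℝ := ((Q+N:ℕ):ℝ) with hm
    have hm0 : (0:ℝ) < m := by linarith
    have hc : ((Q+N+1:ℕ):ℝ) = m + 1 := by rw [hm]; push_cast; ring
    have key : (((Q+N+1:ℕ):ℝ)^2)⁻¹ ≤ 1/m - 1/(m+1) := by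
      rw [hc]
      have e2 : 1/m - 1/(m+1) = ((m*(m+1)))⁻¹ := by field_simp; ring
      rw [e2]
      exact inv_anti₀ (by positivity) (by nlinarith)
    calc ∑ n ∈ Finset.Icc Q (Q+N), ((n:ℝ)^2)⁻¹ + (((Q+N+1:ℕ):ℝ)^2)⁻¹ ≤
        (2/(Q:ℝ) - 1/m) + (1/m - 1/(m+1)) := add_le_add ih key
    _ = 2/(Q:ℝ) - 1/(m+1) := by ring
    _ = 2/(Q:ℝ) - 1/((Q+(N+1):ℕ):ℝ) := by
        rw [hm]; push_cast; ring

lemma nat_tail_sq (Q : ℕ) (hQ : 1 ≤ Q) :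
    ∑' n : ℕ, (if Q ≤ n then ((n:ℝ≥0∞)^2)⁻¹ else 0) ≤ 2 * ((Q:ℝ≥0∞))⁻¹ := by
  rw [ENNReal.tsum_eq_iSup_sum]
  refine iSup_le fun F => ?_
  set N := F.sup id with hN
  have hsub : F.filter (fun n => Q ≤ n) ⊆ Finset.Icc Q (Q + N) := by
    intro n hn
    rw [Finset.mem_filter] at hn
    rw [Finset.mem_Icc]
    exact ⟨hn.2, le_trans (Finset.le_sup (f := id) hn.1) (by omega)⟩
  have hQr : (0:ℝ) < (Q:ℝ) := by exact_mod_cast hQ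
  calc ∑ n ∈ F, (if Q ≤ n then ((n:ℝ≥0∞)^2)⁻¹ else 0)
      = ∑ n ∈ F.filter (fun n => Q ≤ n), ((n:ℝ≥0∞)^2)⁻¹ := (Finset.sum_filter _ _).symm
  _ ≤ ∑ n ∈ Finset.Icc Q (Q+N), ((n:ℝ≥0∞)^2)⁻¹ := Finset.sum_le_sum_of_subset hsub
  _ = ENNReal.ofReal (∑ n ∈ Finset.Icc Q (Q+N), ((n:ℝ)^2)⁻¹) := by
      rw [ENNReal.ofReal_sum_of_nonneg (fun n _ => by positivity)]
      refine Finset.sum_congr rfl fun n hn => ?_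
      have hn1 : 1 ≤ n := le_trans hQ (Finset.mem_Icc.mp hn).1
      have hnr : (0:ℝ) < (n:ℝ) := by exact_mod_cast hn1
      rw [ENNReal.ofReal_inv_of_pos (by positivity), ENNReal.ofReal_pow (by positivity),
        ENNReal.ofReal_natCast]
  _ ≤ ENNReal.ofReal (2/(Q:ℝ)) := by
      refine ENNReal.ofReal_le_ofReal ((real_sq_sum Q hQ N).trans ?_)
      have : (0:ℝ) ≤ 1/((Q+N:ℕ):ℝ) := by positivity
      linarith
  _ = 2 * ((Q:ℝ≥0∞))⁻¹ := by
      rw [ENNReal.ofReal_div_of_pos hQr, ENNReal.ofReal_ofNat, ENNReal.ofReal_natCast,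
        div_eq_mul_inv]

lemma tail_sum_le (s Q : ℕ) (hd1 : 1 ≤ d) (hs : d + 1 ≤ s) (hQ : 1 ≤ Q) :
    ∑' z : Fin d → ℤ, (if Q ≤ nu z then Wn s z else 0) ≤
      ((4*d*3^(d-1) : ℕ) : ℝ≥0∞) * ((Q:ℝ≥0∞)^(s-d))⁻¹ := by
  have step := tsum_le_shell_bound (fun z : Fin d → ℤ => if Q ≤ nu z then Wn s z else 0)
    (fun n => if Q ≤ n then ((n:ℝ≥0∞)^s)⁻¹ else 0)
    (by simp [Wn]) ?_
  · refine step.trans ?_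
    have hterm : ∀ n : ℕ,
        ((2*d*3^(d-1)*n^(d-1) : ℕ) : ℝ≥0∞) * (if Q ≤ n then ((n:ℝ≥0∞)^s)⁻¹ else 0) ≤
        (((2*d*3^(d-1) : ℕ) : ℝ≥0∞) * ((Q:ℝ≥0∞)^(s-d-1))⁻¹) *
          (if Q ≤ n then ((n:ℝ≥0∞)^2)⁻¹ else 0) := by
      intro n
      by_cases h : Q ≤ n
      · rw [if_pos h, if_pos h]
        have hn1 : 1 ≤ n := le_trans hQ h
        have hne : ∀ k : ℕ, ((n:ℝ≥0∞)^k) ≠ 0 := fun k =>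
          pow_ne_zero _ (by exact_mod_cast Nat.cast_ne_zero.mpr (by omega))
        have hnt : ∀ k : ℕ, ((n:ℝ≥0∞)^k) ≠ ⊤ := fun k => natCast_pow_ne_top n k
        have hdecomp : (n:ℝ≥0∞)^s = (n:ℝ≥0∞)^(d-1) * ((n:ℝ≥0∞)^(s-d-1) * (n:ℝ≥0∞)^2) := by
          rw [← pow_add, ← pow_add]
          congr 1
          omega
        have hc : ((2*d*3^(d-1)*n^(d-1) : ℕ) : ℝ≥0∞) =
            ((2*d*3^(d-1) : ℕ) : ℝ≥0∞) * (n:ℝ≥0∞)^(d-1) := by push_cast; ring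
        rw [hc, hdecomp, ENNReal.mul_inv (Or.inl (hne _)) (Or.inl (hnt _)),
          ENNReal.mul_inv (Or.inl (hne _)) (Or.inl (hnt _))]
        calc ((2*d*3^(d-1) : ℕ) : ℝ≥0∞) * (n:ℝ≥0∞)^(d-1) *
              (((n:ℝ≥0∞)^(d-1))⁻¹ * (((n:ℝ≥0∞)^(s-d-1))⁻¹ * ((n:ℝ≥0∞)^2)⁻¹))
            = ((2*d*3^(d-1) : ℕ) : ℝ≥0∞) * ((n:ℝ≥0∞)^(d-1) * ((n:ℝ≥0∞)^(d-1))⁻¹) *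
              (((n:ℝ≥0∞)^(s-d-1))⁻¹ * ((n:ℝ≥0∞)^2)⁻¹) := by ring
        _ = ((2*d*3^(d-1) : ℕ) : ℝ≥0∞) * (((n:ℝ≥0∞)^(s-d-1))⁻¹ * ((n:ℝ≥0∞)^2)⁻¹) := by
              rw [ENNReal.mul_inv_cancel (hne _) (hnt _), mul_one]
        _ ≤ ((2*d*3^(d-1) : ℕ) : ℝ≥0∞) * (((Q:ℝ≥0∞)^(s-d-1))⁻¹ * ((n:ℝ≥0∞)^2)⁻¹) := by
              gcongr
        _ = (((2*d*3^(d-1) : ℕ) : ℝ≥0∞) * ((Q:ℝ≥0∞)^(s-d-1))⁻¹) * ((n:ℝ≥0∞)^2)⁻¹ := by ring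
      · rw [if_neg h, if_neg h, mul_zero, mul_zero]
    calc ∑' n : ℕ, ((2*d*3^(d-1)*n^(d-1) : ℕ) : ℝ≥0∞) *
          (if Q ≤ n then ((n:ℝ≥0∞)^s)⁻¹ else 0)
        ≤ ∑' n : ℕ, (((2*d*3^(d-1) : ℕ) : ℝ≥0∞) * ((Q:ℝ≥0∞)^(s-d-1))⁻¹) *
          (if Q ≤ n then ((n:ℝ≥0∞)^2)⁻¹ else 0) := ENNReal.tsum_le_tsum hterm
    _ = (((2*d*3^(d-1) : ℕ) : ℝ≥0∞) * ((Q:ℝ≥0∞)^(s-d-1))⁻¹) *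
          ∑' n : ℕ, (if Q ≤ n then ((n:ℝ≥0∞)^2)⁻¹ else 0) := ENNReal.tsum_mul_left
    _ ≤ (((2*d*3^(d-1) : ℕ) : ℝ≥0∞) * ((Q:ℝ≥0∞)^(s-d-1))⁻¹) * (2 * ((Q:ℝ≥0∞))⁻¹) :=
          mul_le_mul_right (nat_tail_sq Q hQ) _
    _ = ((4*d*3^(d-1) : ℕ) : ℝ≥0∞) * (((Q:ℝ≥0∞)^(s-d-1))⁻¹ * ((Q:ℝ≥0∞))⁻¹) := by
          push_cast; ring
    _ = ((4*d*3^(d-1) : ℕ) : ℝ≥0∞) * ((Q:ℝ≥0∞)^(s-d))⁻¹ := by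
          congr 1
          rw [← ENNReal.mul_inv (Or.inl (pow_ne_zero _ (by
            exact_mod_cast Nat.cast_ne_zero.mpr (by omega)))) (Or.inl (natCast_pow_ne_top Q _))]
          congr 1
          rw [← pow_succ]
          congr 1
          omega
  · intro z hz
    show (if Q ≤ nu z then Wn s z else 0) ≤ (if Q ≤ nu z then ((nu z : ℝ≥0∞)^s)⁻¹ else 0)
    by_cases h : Q ≤ nu z
    · rw [if_pos h, if_pos h]; exact Wn_le s z
    · rw [if_neg h, if_neg h]

lemma Wn_zero (m : ℕ) : Wn m (0 : Fin d → ℤ) = 0 := by simp [Wn]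

lemma Wn_of_ne (m : ℕ) {z : Fin d → ℤ} (h : z ≠ 0) : Wn m z = ((nu z : ℝ≥0∞)^m)⁻¹ := by
  rw [Wn, if_neg h]

lemma tsum_shift_sub_left (f : (Fin d → ℤ) → ℝ≥0∞) (x : Fin d → ℤ) :
    ∑' z, f (x - z) = ∑' z, f z := (Equiv.subLeft x).tsum_eq f

lemma tsum_shift_sub_right (f : (Fin d → ℤ) → ℝ≥0∞) (y : Fin d → ℤ) :
    ∑' z, f (z - y) = ∑' z, f z := (Equiv.subRight y).tsum_eq f

lemma inv_pow_le_of_le_double {R m : ℕ} (k : ℕ) (h : R ≤ 2 * m) :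
    ((m:ℝ≥0∞)^k)⁻¹ ≤ 2^k * ((R:ℝ≥0∞)^k)⁻¹ := by
  have h2 : ((R:ℝ≥0∞))^k ≤ 2^k * (m:ℝ≥0∞)^k := by
    rw [← mul_pow]
    gcongr
    have : ((2*m : ℕ) : ℝ≥0∞) = 2 * (m:ℝ≥0∞) := by push_cast; ring
    rw [← this]
    exact_mod_cast h
  have h2ne : (2:ℝ≥0∞)^k ≠ 0 := by positivity
  have h2nt : (2:ℝ≥0∞)^k ≠ ⊤ := by
    exact ENNReal.pow_ne_top (by norm_num)
  calc ((m:ℝ≥0∞)^k)⁻¹ = 2^k * ((2:ℝ≥0∞)^k * (m:ℝ≥0∞)^k)⁻¹ := by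
        rw [ENNReal.mul_inv (Or.inl h2ne) (Or.inl h2nt), ← mul_assoc,
          ENNReal.mul_inv_cancel h2ne h2nt, one_mul]
  _ ≤ 2^k * (((R:ℝ≥0∞))^k)⁻¹ := mul_le_mul_right (ENNReal.inv_le_inv.mpr h2) _

lemma natCast_ne_zero' {n : ℕ} (hn : n ≠ 0) : (n:ℝ≥0∞) ≠ 0 := Nat.cast_ne_zero.mpr hn

lemma conv_le (a b : ℕ) (had : a + 1 ≤ d) (hbd : b + 1 ≤ d) (hab : d + 1 ≤ a + b)
    (x y : Fin d → ℤ) (hxy : x ≠ y) :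
    ∑' z : Fin d → ℤ, Wn a (x - z) * Wn b (z - y) ≤
      ((16*d*3^(d-1) : ℕ) : ℝ≥0∞) * 2^(a+b) * ((((nu (x-y) : ℕ)):ℝ≥0∞)^(a+b-d))⁻¹ := by
  set R : ℕ := nu (x - y) with hR
  have hR1 : 1 ≤ R := Nat.pos_of_ne_zero (fun h0 => (sub_ne_zero.mpr hxy) (nu_eq_zero.mp h0))
  set Q : ℕ := R / 2 + 1 with hQ
  have hQ1 : 1 ≤ Q := by omega
  have hQR : R ≤ 2 * Q := by omega
  set K : ℝ≥0∞ := ((4*d*3^(d-1) : ℕ) : ℝ≥0∞) with hK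
  set X : ℝ≥0∞ := (((R:ℕ):ℝ≥0∞)^(a+b-d))⁻¹ with hX
  -- the four majorant functions
  set g1 : (Fin d → ℤ) → ℝ≥0∞ := fun z =>
    (2^b * ((R:ℝ≥0∞)^b)⁻¹) * (if nu (x-z) ≤ R then Wn a (x-z) else 0) with hg1
  set g2 : (Fin d → ℤ) → ℝ≥0∞ := fun z =>
    (2^a * ((R:ℝ≥0∞)^a)⁻¹) * (if nu (z-y) ≤ R then Wn b (z-y) else 0) with hg2
  set g3 : (Fin d → ℤ) → ℝ≥0∞ := fun z =>
    (if Q ≤ nu (x-z) then Wn (a+b) (x-z) else 0) with hg3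
  set g4 : (Fin d → ℤ) → ℝ≥0∞ := fun z =>
    (if Q ≤ nu (z-y) then Wn (a+b) (z-y) else 0) with hg4
  have hpt : ∀ z : Fin d → ℤ, Wn a (x - z) * Wn b (z - y) ≤ g1 z + g2 z + g3 z + g4 z := by
    intro z
    rcases le_or_gt (2 * nu (x - z)) R with h1 | h1
    · -- region A : bounded by g1
      have htri : R ≤ nu (x - z) + nu (z - y) := hR ▸ nu_sub_le x z y
      have h2 : R ≤ 2 * nu (z - y) := by omega
      have hb2 : Wn b (z - y) ≤ 2^b * ((R:ℝ≥0∞)^b)⁻¹ := by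
        by_cases hzy : z - y = 0
        · rw [hzy, Wn_zero]; exact zero_le
        · rw [Wn_of_ne _ hzy]
          exact inv_pow_le_of_le_double b h2
      have hle1 : Wn a (x - z) * Wn b (z - y) ≤ g1 z := by
        rw [hg1]
        simp only
        rw [if_pos (by omega : nu (x - z) ≤ R)]
        calc Wn a (x - z) * Wn b (z - y) ≤ Wn a (x-z) * (2^b * ((R:ℝ≥0∞)^b)⁻¹) :=
              mul_le_mul_right hb2 _
        _ = 2^b * ((R:ℝ≥0∞)^b)⁻¹ * Wn a (x-z) := by ring
      exact hle1.trans (le_self_add.trans (le_self_add.trans le_self_add))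
    rcases le_or_gt (2 * nu (z - y)) R with h2 | h2
    · -- region A' : bounded by g2
      have htri : R ≤ nu (x - z) + nu (z - y) := hR ▸ nu_sub_le x z y
      have h3 : R ≤ 2 * nu (x - z) := by omega
      have ha2 : Wn a (x - z) ≤ 2^a * ((R:ℝ≥0∞)^a)⁻¹ := by
        by_cases hxz : x - z = 0
        · rw [hxz, Wn_zero]; exact zero_le
        · rw [Wn_of_ne _ hxz]
          exact inv_pow_le_of_le_double a h3
      have hle2 : Wn a (x - z) * Wn b (z - y) ≤ g2 z := by
        rw [hg2]
        simp only
        rw [if_pos (by omega : nu (z - y) ≤ R)]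
        exact mul_le_mul_left ha2 _
      exact hle2.trans ((le_add_self).trans (le_self_add.trans le_self_add))
    · -- region B
      have hxz : x - z ≠ 0 := by
        intro h0
        rw [h0] at h1
        rw [nu_eq_zero.mpr rfl] at h1
        omega
      have hzy : z - y ≠ 0 := by
        intro h0
        rw [h0] at h2
        rw [nu_eq_zero.mpr rfl] at h2
        omega
      have hq1 : Q ≤ nu (x - z) := by omega
      have hq2 : Q ≤ nu (z - y) := by omega
      set m1 := nu (x - z) with hm1
      set m2 := nu (z - y) with hm2
      have hm11 : 1 ≤ m1 := by omega
      have hm21 : 1 ≤ m2 := by omega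
      rw [Wn_of_ne _ hxz, Wn_of_ne _ hzy]
      rcases le_total m1 m2 with hle | hle
      · have : ((m1:ℝ≥0∞)^a)⁻¹ * ((m2:ℝ≥0∞)^b)⁻¹ ≤ ((m1:ℝ≥0∞)^(a+b))⁻¹ := by
          rw [pow_add, ENNReal.mul_inv (Or.inl (pow_ne_zero _ (natCast_ne_zero' (by omega)))) (Or.inl (natCast_pow_ne_top m1 a))]
          refine mul_le_mul_right (ENNReal.inv_le_inv.mpr ?_) _
          gcongr
        refine le_trans this ?_
        have hg3z : ((m1:ℝ≥0∞)^(a+b))⁻¹ = g3 z := by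
          rw [hg3]; simp only
          rw [if_pos hq1, Wn_of_ne _ hxz]
        rw [hg3z]
        calc g3 z ≤ (g1 z + g2 z) + g3 z := le_add_self
        _ ≤ g1 z + g2 z + g3 z + g4 z := le_self_add
      · have : ((m1:ℝ≥0∞)^a)⁻¹ * ((m2:ℝ≥0∞)^b)⁻¹ ≤ ((m2:ℝ≥0∞)^(a+b))⁻¹ := by
          rw [pow_add, ENNReal.mul_inv (Or.inl (pow_ne_zero _ (natCast_ne_zero' (by omega)))) (Or.inl (natCast_pow_ne_top m2 a))]
          refine mul_le_mul_left (ENNReal.inv_le_inv.mpr ?_) _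
          gcongr
        refine le_trans this ?_
        have hg4z : ((m2:ℝ≥0∞)^(a+b))⁻¹ = g4 z := by
          rw [hg4]; simp only
          rw [if_pos hq2, Wn_of_ne _ hzy]
        rw [hg4z]
        exact le_add_self
  -- sum the majorants
  have hsum1 : ∑' z, g1 z ≤ K * 2^(a+b) * X := by
    rw [hg1]
    rw [ENNReal.tsum_mul_left]
    have hshift : ∑' z : Fin d → ℤ, (if nu (x-z) ≤ R then Wn a (x-z) else 0) =
        ∑' w : Fin d → ℤ, (if nu w ≤ R then Wn a w else 0) :=
      tsum_shift_sub_left (fun w => if nu w ≤ R then Wn a w else 0) x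
    rw [hshift]
    calc (2^b * ((R:ℝ≥0∞)^b)⁻¹) * ∑' w : Fin d → ℤ, (if nu w ≤ R then Wn a w else 0)
        ≤ (2^b * ((R:ℝ≥0∞)^b)⁻¹) * (K * (R:ℝ≥0∞)^(d-a)) :=
          mul_le_mul_right (ball_sum_le a R had hR1) _
    _ = K * 2^b * ((R:ℝ≥0∞)^(d-a) * ((R:ℝ≥0∞)^b)⁻¹) := by ring
    _ ≤ K * 2^(a+b) * X := by
        rw [hX]
        have hb' : b = (a+b-d) + (d-a) := by omega
        have : (R:ℝ≥0∞)^(d-a) * ((R:ℝ≥0∞)^b)⁻¹ = (((R:ℕ):ℝ≥0∞)^(a+b-d))⁻¹ := by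
          conv_lhs => rw [hb']
          rw [pow_add, ENNReal.mul_inv (Or.inl (pow_ne_zero _ (natCast_ne_zero' (by omega)))) (Or.inl (natCast_pow_ne_top R _))]
          rw [← mul_comm, mul_assoc]
          rw [ENNReal.inv_mul_cancel (pow_ne_zero _ (natCast_ne_zero' (by omega))) (natCast_pow_ne_top R _)]
          rw [mul_one]
        rw [this]
        gcongr
        · exact one_le_two
        · omega
  have hsum2 : ∑' z, g2 z ≤ K * 2^(a+b) * X := by
    rw [hg2]
    rw [ENNReal.tsum_mul_left]
    have hshift : ∑' z : Fin d → ℤ, (if nu (z-y) ≤ R then Wn b (z-y) else 0) =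
        ∑' w : Fin d → ℤ, (if nu w ≤ R then Wn b w else 0) :=
      tsum_shift_sub_right (fun w => if nu w ≤ R then Wn b w else 0) y
    rw [hshift]
    calc (2^a * ((R:ℝ≥0∞)^a)⁻¹) * ∑' w : Fin d → ℤ, (if nu w ≤ R then Wn b w else 0)
        ≤ (2^a * ((R:ℝ≥0∞)^a)⁻¹) * (K * (R:ℝ≥0∞)^(d-b)) :=
          mul_le_mul_right (ball_sum_le b R hbd hR1) _
    _ = K * 2^a * ((R:ℝ≥0∞)^(d-b) * ((R:ℝ≥0∞)^a)⁻¹) := by ring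
    _ ≤ K * 2^(a+b) * X := by
        rw [hX]
        have ha' : a = (a+b-d) + (d-b) := by omega
        have : (R:ℝ≥0∞)^(d-b) * ((R:ℝ≥0∞)^a)⁻¹ = (((R:ℕ):ℝ≥0∞)^(a+b-d))⁻¹ := by
          conv_lhs => rw [ha']
          rw [pow_add, ENNReal.mul_inv (Or.inl (pow_ne_zero _ (natCast_ne_zero' (by omega)))) (Or.inl (natCast_pow_ne_top R _))]
          rw [← mul_comm, mul_assoc]
          rw [ENNReal.inv_mul_cancel (pow_ne_zero _ (natCast_ne_zero' (by omega))) (natCast_pow_ne_top R _)]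
          rw [mul_one]
        rw [this]
        gcongr
        · exact one_le_two
        · omega
  have htailbnd : (((Q:ℕ):ℝ≥0∞)^(a+b-d))⁻¹ ≤ 2^(a+b) * X := by
    rw [hX]
    refine (inv_pow_le_of_le_double (a+b-d) hQR).trans ?_
    gcongr
    · exact one_le_two
    · omega
  have hsum3 : ∑' z, g3 z ≤ K * 2^(a+b) * X := by
    rw [hg3]
    have hshift : ∑' z : Fin d → ℤ, (if Q ≤ nu (x-z) then Wn (a+b) (x-z) else 0) =
        ∑' w : Fin d → ℤ, (if Q ≤ nu w then Wn (a+b) w else 0) :=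
      tsum_shift_sub_left (fun w => if Q ≤ nu w then Wn (a+b) w else 0) x
    rw [hshift]
    refine (tail_sum_le (a+b) Q (by omega) hab hQ1).trans ?_
    rw [mul_assoc K]
    exact hK ▸ mul_le_mul_right htailbnd K
  have hsum4 : ∑' z, g4 z ≤ K * 2^(a+b) * X := by
    rw [hg4]
    have hshift : ∑' z : Fin d → ℤ, (if Q ≤ nu (z-y) then Wn (a+b) (z-y) else 0) =
        ∑' w : Fin d → ℤ, (if Q ≤ nu w then Wn (a+b) w else 0) :=
      tsum_shift_sub_right (fun w => if Q ≤ nu w then Wn (a+b) w else 0) y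
    rw [hshift]
    refine (tail_sum_le (a+b) Q (by omega) hab hQ1).trans ?_
    rw [mul_assoc K]
    exact hK ▸ mul_le_mul_right htailbnd K
  calc ∑' z : Fin d → ℤ, Wn a (x - z) * Wn b (z - y)
      ≤ ∑' z : Fin d → ℤ, (g1 z + g2 z + g3 z + g4 z) := ENNReal.tsum_le_tsum hpt
  _ = ((∑' z, g1 z + ∑' z, g2 z) + ∑' z, g3 z) + ∑' z, g4 z := by
      rw [ENNReal.tsum_add, ENNReal.tsum_add, ENNReal.tsum_add]
  _ ≤ ((K * 2^(a+b) * X + K * 2^(a+b) * X) + K * 2^(a+b) * X) + K * 2^(a+b) * X := by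
      gcongr
  _ = (4 * K) * 2^(a+b) * X := by ring
  _ = ((16*d*3^(d-1) : ℕ) : ℝ≥0∞) * 2^(a+b) * X := by
      rw [hK]
      congr 2
      push_cast
      ring

lemma Wn_neg (m : ℕ) (z : Fin d → ℤ) : Wn m (-z) = Wn m z := by
  rw [Wn, Wn, nu_neg]
  simp [neg_eq_zero]

lemma Wn_mul (a b : ℕ) (z : Fin d → ℤ) : Wn a z * Wn b z = Wn (a+b) z := by
  by_cases h : z = 0
  · simp [h, Wn_zero]
  · rw [Wn_of_ne _ h, Wn_of_ne _ h, Wn_of_ne _ h]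
    have h1 : 1 ≤ nu z := Nat.pos_of_ne_zero (fun h0 => h (nu_eq_zero.mp h0))
    rw [pow_add, ENNReal.mul_inv (Or.inl (pow_ne_zero _ (natCast_ne_zero' (by omega))))
      (Or.inl (natCast_pow_ne_top _ _))]

lemma latPow_eq_Wn (hd2 : 2 ≤ d) (u : Fin d → ℤ) :
    latPow u ((2 : ℝ) - d) = Wn (d-2) u := by
  by_cases h : u = 0
  · rw [h, latPow, if_pos rfl, Wn_zero]
  · rw [latPow, if_neg h, Wn_of_ne _ h]
    have h1 : 1 ≤ nu u := Nat.pos_of_ne_zero (fun h0 => h (nu_eq_zero.mp h0))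
    have hnr : (0:ℝ) < (nu u : ℝ) := by exact_mod_cast h1
    have hexp : (2 : ℝ) - d = -(((d-2 : ℕ) : ℝ)) := by
      rw [Nat.cast_sub hd2]
      push_cast
      ring
    rw [norm_eq_nu, hexp, Real.rpow_neg (le_of_lt hnr), Real.rpow_natCast]
    rw [ENNReal.ofReal_inv_of_pos (by positivity), ENNReal.ofReal_pow (le_of_lt hnr),
      ENNReal.ofReal_natCast]

end LatAux

open LatAux in
theorem statement1 (d : ℕ) (hd : 6 < d) :
    ∃ C : ℝ, 0 < C ∧ ∀ x y : Fin d → ℤ, x ≠ y →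
      ∑' z₁ : Fin d → ℤ, ∑' z₂ : Fin d → ℤ,
        latPow (x - z₁) ((2 : ℝ) - d) * latPow (z₁ - z₂) ((2 : ℝ) - d) *
          latPow (z₂ - y) ((2 : ℝ) - d) ≤
        ENNReal.ofReal (C * ‖x - y‖ ^ ((6 : ℝ) - d)) := by
  have hd2 : 2 ≤ d := by omega
  set A : ℕ := 16*d*3^(d-1) with hA
  set K0 : ℕ := 4*d*3^(d-1) with hK0
  set N : ℕ := A * 2^((d-2)+(d-2)) * (A * 2^((d-4)+(d-2))) + K0 with hN
  have hN1 : 1 ≤ N := by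
    have h3 : 1 ≤ 3^(d-1) := Nat.one_le_pow _ _ (by omega)
    have : 1 ≤ K0 := by rw [hK0]; nlinarith
    omega
  refine ⟨(N : ℝ), by exact_mod_cast hN1, ?_⟩
  intro x y hxy
  set R : ℕ := nu (x - y) with hR
  have hR1 : 1 ≤ R := Nat.pos_of_ne_zero (fun h0 => (sub_ne_zero.mpr hxy) (nu_eq_zero.mp h0))
  set C1 : ℝ≥0∞ := ((A : ℕ) : ℝ≥0∞) * 2^((d-2)+(d-2)) with hC1
  set K0e : ℝ≥0∞ := ((K0 : ℕ) : ℝ≥0∞) with hK0e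
  set X : ℝ≥0∞ := (((R : ℕ):ℝ≥0∞)^(d-6))⁻¹ with hX
  have hrw : ∀ z₁ z₂ : Fin d → ℤ,
      latPow (x - z₁) ((2 : ℝ) - d) * latPow (z₁ - z₂) ((2 : ℝ) - d) *
        latPow (z₂ - y) ((2 : ℝ) - d) =
      Wn (d-2) (x - z₁) * Wn (d-2) (z₁ - z₂) * Wn (d-2) (z₂ - y) := by
    intro z₁ z₂
    rw [latPow_eq_Wn hd2, latPow_eq_Wn hd2, latPow_eq_Wn hd2]
  have hinner : ∀ z₂ : Fin d → ℤ,
      (∑' z₁ : Fin d → ℤ, Wn (d-2) (x - z₁) * Wn (d-2) (z₁ - z₂)) ≤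
        C1 * Wn (d-4) (x - z₂) + (if z₂ = x then K0e else 0) := by
    intro z₂
    by_cases hzx : z₂ = x
    · rw [hzx, sub_self, Wn_zero, mul_zero, if_pos rfl, zero_add]
      have hpt : ∀ z₁ : Fin d → ℤ, Wn (d-2) (x - z₁) * Wn (d-2) (z₁ - x) =
          (if 1 ≤ nu (x - z₁) then Wn ((d-2)+(d-2)) (x - z₁) else 0) := by
        intro z₁
        have he1 : z₁ - x = -(x - z₁) := (neg_sub x z₁).symm
        rw [he1, Wn_neg, Wn_mul]
        by_cases h : 1 ≤ nu (x - z₁)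
        · rw [if_pos h]
        · rw [if_neg h]
          have h0 : x - z₁ = 0 := nu_eq_zero.mp (by omega)
          rw [h0, Wn_zero]
      rw [tsum_congr hpt]
      rw [tsum_shift_sub_left (fun w => if 1 ≤ nu w then Wn ((d-2)+(d-2)) w else 0) x]
      refine (tail_sum_le ((d-2)+(d-2)) 1 (by omega) (by omega) le_rfl).trans ?_
      rw [hK0e, hK0]
      simp
    · have hconv := conv_le (d-2) (d-2) (by omega) (by omega) (by omega) x z₂
        (fun h => hzx h.symm)
      have hxz2 : x - z₂ ≠ 0 := sub_ne_zero.mpr (fun h => hzx h.symm)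
      have he : (d-2)+(d-2)-d = d-4 := by omega
      rw [he] at hconv
      refine le_trans (hconv.trans ?_) le_self_add
      rw [Wn_of_ne _ hxz2, hC1, hA]
  have houter : (∑' z₂ : Fin d → ℤ, Wn (d-4) (x - z₂) * Wn (d-2) (z₂ - y)) ≤
      ((16*d*3^(d-1) : ℕ) : ℝ≥0∞) * 2^((d-4)+(d-2)) * X := by
    have hconv := conv_le (d-4) (d-2) (by omega) (by omega) (by omega) x y hxy
    have he : (d-4)+(d-2)-d = d-6 := by omega
    rw [he] at hconv
    exact hconv
  have hsingle : (∑' z₂ : Fin d → ℤ, (if z₂ = x then K0e else 0) * Wn (d-2) (z₂ - y)) ≤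
      K0e * X := by
    rw [tsum_eq_single x (fun b hb => by rw [if_neg hb, zero_mul])]
    rw [if_pos rfl]
    refine mul_le_mul_right ?_ K0e
    rw [Wn_of_ne _ (sub_ne_zero.mpr hxy), hX]
    refine ENNReal.inv_le_inv.mpr ?_
    gcongr
    · exact_mod_cast hR1
    · omega
  calc ∑' z₁ : Fin d → ℤ, ∑' z₂ : Fin d → ℤ,
        latPow (x - z₁) ((2 : ℝ) - d) * latPow (z₁ - z₂) ((2 : ℝ) - d) *
          latPow (z₂ - y) ((2 : ℝ) - d)
      = ∑' z₁ : Fin d → ℤ, ∑' z₂ : Fin d → ℤ,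
        Wn (d-2) (x - z₁) * Wn (d-2) (z₁ - z₂) * Wn (d-2) (z₂ - y) :=
        tsum_congr fun z₁ => tsum_congr fun z₂ => hrw z₁ z₂
  _ = ∑' z₂ : Fin d → ℤ, ∑' z₁ : Fin d → ℤ,
        Wn (d-2) (x - z₁) * Wn (d-2) (z₁ - z₂) * Wn (d-2) (z₂ - y) := ENNReal.tsum_comm
  _ = ∑' z₂ : Fin d → ℤ,
        (∑' z₁ : Fin d → ℤ, Wn (d-2) (x - z₁) * Wn (d-2) (z₁ - z₂)) * Wn (d-2) (z₂ - y) :=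
        tsum_congr fun z₂ => ENNReal.tsum_mul_right
  _ ≤ ∑' z₂ : Fin d → ℤ,
        (C1 * Wn (d-4) (x - z₂) + (if z₂ = x then K0e else 0)) * Wn (d-2) (z₂ - y) :=
        ENNReal.tsum_le_tsum fun z₂ => mul_le_mul_left (hinner z₂) _
  _ = ∑' z₂ : Fin d → ℤ,
        (C1 * (Wn (d-4) (x - z₂) * Wn (d-2) (z₂ - y)) +
          (if z₂ = x then K0e else 0) * Wn (d-2) (z₂ - y)) :=
        tsum_congr fun z₂ => by ring
  _ = C1 * (∑' z₂ : Fin d → ℤ, Wn (d-4) (x - z₂) * Wn (d-2) (z₂ - y)) +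
        ∑' z₂ : Fin d → ℤ, (if z₂ = x then K0e else 0) * Wn (d-2) (z₂ - y) := by
        rw [ENNReal.tsum_add, ENNReal.tsum_mul_left]
  _ ≤ C1 * (((16*d*3^(d-1) : ℕ) : ℝ≥0∞) * 2^((d-4)+(d-2)) * X) + K0e * X :=
        add_le_add (mul_le_mul_right houter C1) hsingle
  _ = ((N : ℕ) : ℝ≥0∞) * X := by
        rw [hC1, hK0e, hN, hA]
        push_cast
        ring
  _ = ENNReal.ofReal ((N : ℝ) * ‖x - y‖ ^ ((6 : ℝ) - d)) := by
        have hnorm : ‖x - y‖ = (R : ℝ) := norm_eq_nu (x - y)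
        have hRr : (0:ℝ) < (R:ℝ) := by exact_mod_cast hR1
        have hexp : (6 : ℝ) - d = -(((d-6 : ℕ) : ℝ)) := by
          rw [Nat.cast_sub (by omega)]
          push_cast
          ring
        rw [hnorm, hexp, Real.rpow_neg (le_of_lt hRr), Real.rpow_natCast]
        rw [ENNReal.ofReal_mul (by positivity), ENNReal.ofReal_inv_of_pos (by positivity),
          ENNReal.ofReal_pow (le_of_lt hRr), ENNReal.ofReal_natCast, ENNReal.ofReal_natCast,
          hX]
end

section
/- Let d > 6 be an integer. There exists a constant C = C(d) > 0 such that for all x, y ∈ ℤ^d with x ≠ 0 and y ≠ 0, one has ∑_{u, v ∈ ℤ^d} |u − x|^{2−d} |v − y|^{2−d} |u|^{2−d} |v|^{2−d} |u − v|^{2−d} ≤ C |x|^{2−d} |y|^{2−d}, where terms in which any of u − x, v − y, u, v, u − v vanishes are omitted from the sum. -/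
open scoped ENNReal

noncomputable def Gc {d : ℕ} (z : Fin d → ℤ) (a : ℝ) : ℝ≥0∞ :=
  ENNReal.ofReal ((max ‖z‖ 1) ^ a)

noncomputable def Kc (d : ℕ) : ℝ≥0∞ := ∑' u : Fin d → ℤ, latPow u (-((d : ℝ) + 4⁻¹))

noncomputable def Cd (d : ℕ) : ℝ≥0∞ :=
  (ENNReal.ofReal (2 ^ (((d : ℝ) - 2) + ((d : ℝ) - 2))) * (Kc d + Kc d)) *
    (ENNReal.ofReal (2 ^ (((d : ℝ) - 2) + (((d : ℝ) - 2) + ((d : ℝ) - 2) - ((d : ℝ) + 4⁻¹)))) *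
      (Kc d + Kc d) + 1)

variable {d : ℕ}

lemma one_le_norm {z : Fin d → ℤ} (hz : z ≠ 0) : (1 : ℝ) ≤ ‖z‖ := by
  obtain ⟨i, hi⟩ := Function.ne_iff.1 hz
  have h1 : ‖z i‖ ≤ ‖z‖ := norm_le_pi_norm z i
  have h2 : (1 : ℝ) ≤ ‖z i‖ := by
    rw [Int.norm_eq_abs]
    exact_mod_cast Int.one_le_abs (by simpa using hi)
  linarith

lemma latPow_le_one {z : Fin d → ℤ} {a : ℝ} (ha : a ≤ 0) : latPow z a ≤ 1 := by
  rw [latPow]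
  split
  · exact zero_le_one
  · rw [show (1 : ℝ≥0∞) = ENNReal.ofReal 1 by simp]
    exact ENNReal.ofReal_le_ofReal
      (Real.rpow_le_one_of_one_le_of_nonpos (one_le_norm (by assumption)) ha)

lemma latPow_neg_arg (z : Fin d → ℤ) (a : ℝ) : latPow (-z) a = latPow z a := by
  simp [latPow, norm_neg]

lemma Gc_le_one {z : Fin d → ℤ} {a : ℝ} (ha : a ≤ 0) : Gc z a ≤ 1 := by
  rw [Gc, show (1 : ℝ≥0∞) = ENNReal.ofReal 1 by simp]
  exact ENNReal.ofReal_le_ofReal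
    (Real.rpow_le_one_of_one_le_of_nonpos (le_max_right _ _) ha)

lemma Gc_of_ne {z : Fin d → ℤ} (hz : z ≠ 0) (a : ℝ) : Gc z a = latPow z a := by
  rw [Gc, latPow, if_neg hz, max_eq_left (one_le_norm hz)]

lemma Gc_zero (a : ℝ) : Gc (0 : Fin d → ℤ) a = 1 := by
  simp [Gc]

lemma Gc_ne_top (z : Fin d → ℤ) (a : ℝ) : Gc z a ≠ ⊤ := ENNReal.ofReal_ne_top

lemma tsum_shift (f : (Fin d → ℤ) → ℝ≥0∞) (w : Fin d → ℤ) :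
    ∑' v : Fin d → ℤ, f (v - w) = ∑' v : Fin d → ℤ, f v :=
  (Equiv.subRight w).tsum_eq f

lemma tsum_pi_prod (f : ℤ → ℝ≥0∞) : ∀ n : ℕ,
    ∑' u : Fin n → ℤ, ∏ i, f (u i) = (∑' k : ℤ, f k) ^ n := by
  intro n
  induction n with
  | zero =>
      rw [tsum_eq_single (fun _ => 0) (fun b hb => absurd (Subsingleton.elim b _) hb)]
      simp
  | succ n ih =>
      rw [← (Fin.consEquiv (fun _ : Fin (n + 1) => ℤ)).tsum_eq, ENNReal.tsum_prod']
      have : ∀ (k : ℤ) (w : Fin n → ℤ),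
          ∏ i, f ((Fin.consEquiv (fun _ : Fin (n+1) => ℤ)) (k, w) i) = f k * ∏ i, f (w i) := by
        intro k w
        simp [Fin.consEquiv, Fin.prod_univ_succ]
      calc ∑' (k : ℤ) (w : Fin n → ℤ),
            ∏ i, f ((Fin.consEquiv (fun _ : Fin (n+1) => ℤ)) (k, w) i)
          = ∑' (k : ℤ), f k * ∑' w : Fin n → ℤ, ∏ i, f (w i) := by
            simp only [this, ENNReal.tsum_mul_left]
        _ = (∑' k : ℤ, f k) ^ (n + 1) := by
            rw [ih, ENNReal.tsum_mul_right, pow_succ, mul_comm]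

lemma summable_max_rpow {p : ℝ} (hp : 1 < p) :
    Summable (fun k : ℤ => (max |(k : ℝ)| 1) ^ (-p)) := by
  have hnat : Summable (fun n : ℕ => (max (n : ℝ) 1) ^ (-p)) := by
    have h1 : Summable (fun n : ℕ => ((n : ℝ)) ^ (-p)) :=
      Real.summable_nat_rpow.2 (by linarith)
    have h2 : Summable (fun n : ℕ => (((n : ℝ) + 1)) ^ (-p)) := by
      have := (summable_nat_add_iff 1).2 h1
      refine this.congr fun n => ?_
      push_cast
      ring_nf
    refine (summable_nat_add_iff 1).1 ?_
    refine h2.congr fun n => ?_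
    rw [max_eq_left (by push_cast; linarith [Nat.cast_nonneg (α := ℝ) n])]
    push_cast
    ring_nf
  apply Summable.of_nat_of_neg_add_one
  · refine hnat.congr fun n => ?_
    simp
  · refine ((summable_nat_add_iff 1).2 hnat).congr fun n => ?_
    push_cast
    rw [abs_neg, abs_of_nonneg (by positivity)]

lemma Kc_ne_top (hd : 0 < d) : Kc d ≠ ⊤ := by
  set s : ℝ := (d : ℝ) + 4⁻¹ with hs
  have hds : (d : ℝ) < s := by rw [hs]; norm_num
  have hd0 : (0 : ℝ) < d := by exact_mod_cast hd
  have hp : 1 < s / d := (one_lt_div hd0).2 hds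
  have hs0 : 0 < s := by linarith
  set φ : ℤ → ℝ≥0∞ := fun k => ENNReal.ofReal ((max |(k : ℝ)| 1) ^ (-(s / d))) with hφ
  have hbound : ∀ u : Fin d → ℤ, latPow u (-s) ≤ ∏ i, φ (u i) := by
    intro u
    by_cases hu : u = 0
    · simp [latPow, hu]
    · rw [latPow, if_neg hu]
      have h1 : (1 : ℝ) ≤ ‖u‖ := one_le_norm hu
      rw [← ENNReal.ofReal_prod_of_nonneg (fun i _ => Real.rpow_nonneg (by positivity) _)]
      apply ENNReal.ofReal_le_ofReal
      have heq : ‖u‖ ^ (-s) = ∏ _i : Fin d, ‖u‖ ^ (-(s / d)) := by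
        rw [Finset.prod_const, ← Real.rpow_natCast (‖u‖ ^ (-(s / d))),
          ← Real.rpow_mul (by linarith), Finset.card_univ, Fintype.card_fin]
        congr 1
        field_simp
      rw [heq]
      apply Finset.prod_le_prod (fun i _ => by positivity)
      intro i _
      apply Real.rpow_le_rpow_of_nonpos (by positivity) ?_ (neg_nonpos.2 (by positivity))
      apply max_le ?_ h1
      have := norm_le_pi_norm u i
      rwa [Int.norm_eq_abs] at this
  have : Kc d ≤ (∑' k : ℤ, φ k) ^ d := by
    rw [Kc, ← tsum_pi_prod φ d]
    exact ENNReal.tsum_le_tsum hbound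
  have hφtop : (∑' k : ℤ, φ k) ≠ ⊤ := by
    rw [hφ, ← ENNReal.ofReal_tsum_of_nonneg (fun k => by positivity) (summable_max_rpow hp)]
    exact ENNReal.ofReal_ne_top
  exact ne_top_of_le_ne_top (ENNReal.pow_ne_top hφtop) this

lemma real_key {A B D s α β : ℝ} (hA : 1 ≤ A) (hB : 1 ≤ B) (hD : 1 ≤ D)
    (hs : 0 ≤ s) (hAB : A ≤ B) (hDB : D ≤ 2 * B)
    (h1 : 0 ≤ s - α) (h2 : s - α ≤ β) :
    A ^ (-α) * B ^ (-β) ≤ 2 ^ (α + β) * (D ^ (s - α - β) * A ^ (-s)) := by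
  have hA0 : (0 : ℝ) < A := by linarith
  have hB0 : (0 : ℝ) < B := by linarith
  have hD0 : (0 : ℝ) < D := by linarith
  have e1 : B ^ (-β) = B ^ (s - α - β) * B ^ (-(s - α)) := by
    rw [← Real.rpow_add hB0]; ring_nf
  have e2 : B ^ (s - α - β) ≤ (D / 2) ^ (s - α - β) :=
    Real.rpow_le_rpow_of_nonpos (by linarith) (by linarith) (by linarith)
  have e3 : B ^ (-(s - α)) ≤ A ^ (-(s - α)) :=
    Real.rpow_le_rpow_of_nonpos hA0 hAB (by linarith)
  have e4 : (D / 2) ^ (s - α - β) = D ^ (s - α - β) * 2 ^ (α + β - s) := by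
    rw [Real.div_rpow hD0.le (by norm_num), div_eq_mul_inv,
      ← Real.rpow_neg (by norm_num : (0:ℝ) ≤ 2), show -(s - α - β) = α + β - s by ring]
  have e5 : (2 : ℝ) ^ (α + β - s) ≤ 2 ^ (α + β) :=
    Real.rpow_le_rpow_of_exponent_le one_le_two (by linarith)
  calc A ^ (-α) * B ^ (-β)
      = A ^ (-α) * (B ^ (s - α - β) * B ^ (-(s - α))) := by rw [← e1]
    _ ≤ A ^ (-α) * ((D ^ (s - α - β) * 2 ^ (α + β - s)) * A ^ (-(s - α))) := by
        apply mul_le_mul_of_nonneg_left _ (by positivity)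
        rw [← e4]
        exact mul_le_mul e2 e3 (by positivity) (by positivity)
    _ = 2 ^ (α + β - s) * (D ^ (s - α - β) * (A ^ (-α) * A ^ (-(s - α)))) := by ring
    _ = 2 ^ (α + β - s) * (D ^ (s - α - β) * A ^ (-s)) := by
        rw [← Real.rpow_add hA0, show -α + -(s - α) = -s by ring]
    _ ≤ 2 ^ (α + β) * (D ^ (s - α - β) * A ^ (-s)) := by
        apply mul_le_mul_of_nonneg_right e5 (by positivity)

lemma real_pair {A X m : ℝ} (hA : 1 ≤ A) (hX : 1 ≤ X) (hm : 0 ≤ m) (h : X ≤ 2 * A) :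
    A ^ (-m) ≤ 2 ^ m * X ^ (-m) := by
  have hA0 : (0 : ℝ) < A := by linarith
  have hX0 : (0 : ℝ) < X := by linarith
  have e1 : A ^ (-m) ≤ (X / 2) ^ (-m) :=
    Real.rpow_le_rpow_of_nonpos (by linarith) (by linarith) (by linarith)
  have e2 : (X / 2) ^ (-m) = 2 ^ m * X ^ (-m) := by
    rw [Real.div_rpow hX0.le (by norm_num), div_eq_mul_inv,
      ← Real.rpow_neg (by norm_num : (0:ℝ) ≤ 2), neg_neg, mul_comm]
  linarith [e1, e2.le, e2.ge]

lemma lemA {α β : ℝ} (h1 : 0 ≤ (d : ℝ) + 4⁻¹ - α) (h2 : (d : ℝ) + 4⁻¹ - α ≤ β)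
    (h3 : 0 ≤ (d : ℝ) + 4⁻¹ - β) (h4 : (d : ℝ) + 4⁻¹ - β ≤ α) (w : Fin d → ℤ) :
    ∑' v : Fin d → ℤ, latPow v (-α) * latPow (v - w) (-β) ≤
      ENNReal.ofReal (2 ^ (α + β)) * (Gc w ((d : ℝ) + 4⁻¹ - α - β) * (Kc d + Kc d)) := by
  set s : ℝ := (d : ℝ) + 4⁻¹ with hsdef
  have hs0 : (0 : ℝ) ≤ s := by rw [hsdef]; positivity
  have key : ∀ v : Fin d → ℤ, latPow v (-α) * latPow (v - w) (-β) ≤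
      ENNReal.ofReal (2 ^ (α + β)) *
        (Gc w (s - α - β) * (latPow v (-s) + latPow (v - w) (-s))) := by
    intro v
    by_cases hv : v = 0
    · simp [latPow, hv]
    by_cases hvw : v - w = 0
    · simp [latPow, hvw]
    have hA : (1 : ℝ) ≤ ‖v‖ := one_le_norm hv
    have hB : (1 : ℝ) ≤ ‖v - w‖ := one_le_norm hvw
    have hD : (1 : ℝ) ≤ max ‖w‖ 1 := le_max_right _ _
    have hDsum : max ‖w‖ 1 ≤ ‖v‖ + ‖v - w‖ := by
      have h := norm_sub_le v (v - w)
      have h2 : v - (v - w) = w := by abel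
      rw [h2] at h
      exact max_le (by linarith) (by linarith)
    rw [latPow, if_neg hv, latPow, if_neg hvw, latPow, if_neg hv, latPow, if_neg hvw, Gc]
    rw [← ENNReal.ofReal_add (by positivity) (by positivity),
      ← ENNReal.ofReal_mul (by positivity), ← ENNReal.ofReal_mul (by positivity),
      ← ENNReal.ofReal_mul (by positivity)]
    apply ENNReal.ofReal_le_ofReal
    rcases le_total ‖v‖ ‖v - w‖ with hAB | hAB
    · have hkey := real_key hA hB hD hs0 hAB (by linarith) h1 h2
      have hle : ‖v‖ ^ (-s) ≤ ‖v‖ ^ (-s) + ‖v - w‖ ^ (-s) :=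
        le_add_of_nonneg_right (by positivity)
      calc ‖v‖ ^ (-α) * ‖v - w‖ ^ (-β)
          ≤ 2 ^ (α + β) * ((max ‖w‖ 1) ^ (s - α - β) * ‖v‖ ^ (-s)) := hkey
        _ ≤ 2 ^ (α + β) * ((max ‖w‖ 1) ^ (s - α - β) * (‖v‖ ^ (-s) + ‖v - w‖ ^ (-s))) := by
            apply mul_le_mul_of_nonneg_left _ (by positivity)
            exact mul_le_mul_of_nonneg_left hle (by positivity)
    · have hkey := real_key hB hA hD hs0 hAB (by linarith) h3 h4
      have hle : ‖v - w‖ ^ (-s) ≤ ‖v‖ ^ (-s) + ‖v - w‖ ^ (-s) :=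
        le_add_of_nonneg_left (by positivity)
      calc ‖v‖ ^ (-α) * ‖v - w‖ ^ (-β)
          = ‖v - w‖ ^ (-β) * ‖v‖ ^ (-α) := by ring
        _ ≤ 2 ^ (β + α) * ((max ‖w‖ 1) ^ (s - β - α) * ‖v - w‖ ^ (-s)) := hkey
        _ = 2 ^ (α + β) * ((max ‖w‖ 1) ^ (s - α - β) * ‖v - w‖ ^ (-s)) := by
            rw [show β + α = α + β by ring, show s - β - α = s - α - β by ring]
        _ ≤ 2 ^ (α + β) * ((max ‖w‖ 1) ^ (s - α - β) * (‖v‖ ^ (-s) + ‖v - w‖ ^ (-s))) := by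
            apply mul_le_mul_of_nonneg_left _ (by positivity)
            exact mul_le_mul_of_nonneg_left hle (by positivity)
  calc ∑' v : Fin d → ℤ, latPow v (-α) * latPow (v - w) (-β)
      ≤ ∑' v : Fin d → ℤ, ENNReal.ofReal (2 ^ (α + β)) *
          (Gc w (s - α - β) * (latPow v (-s) + latPow (v - w) (-s))) :=
        ENNReal.tsum_le_tsum key
    _ = ENNReal.ofReal (2 ^ (α + β)) * (Gc w (s - α - β) * (Kc d + Kc d)) := by
        rw [ENNReal.tsum_mul_left, ENNReal.tsum_mul_left, ENNReal.tsum_add]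
        rw [tsum_shift (fun v => latPow v (-s)) w]
        rfl

lemma lemT (hd : 6 < d) (a b : Fin d → ℤ) :
    ∑' u : Fin d → ℤ, ∑' v : Fin d → ℤ,
      latPow (u - a) ((2 : ℝ) - d) * latPow (v - b) ((2 : ℝ) - d) *
        latPow (u - v) ((2 : ℝ) - d) ≤ Cd d := by
  have hd7 : (7 : ℝ) ≤ (d : ℝ) := by exact_mod_cast hd
  set m : ℝ := (d : ℝ) - 2 with hm
  set s : ℝ := (d : ℝ) + 4⁻¹ with hs
  have hm2 : (2 : ℝ) - (d : ℝ) = -m := by rw [hm]; ring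
  have inner : ∀ u : Fin d → ℤ,
      ∑' v : Fin d → ℤ, latPow (v - b) (-m) * latPow (u - v) (-m) ≤
      ENNReal.ofReal (2 ^ (m + m)) * (Gc (u - b) (s - m - m) * (Kc d + Kc d)) := by
    intro u
    calc ∑' v : Fin d → ℤ, latPow (v - b) (-m) * latPow (u - v) (-m)
        = ∑' v : Fin d → ℤ,
            (fun z => latPow z (-m) * latPow (z - (u - b)) (-m)) (v - b) := by
          apply tsum_congr; intro v
          simp only
          rw [sub_sub_sub_cancel_right, ← neg_sub v u, latPow_neg_arg]
      _ = ∑' z : Fin d → ℤ, latPow z (-m) * latPow (z - (u - b)) (-m) :=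
          tsum_shift (fun z => latPow z (-m) * latPow (z - (u - b)) (-m)) b
      _ ≤ ENNReal.ofReal (2 ^ (m + m)) * (Gc (u - b) (s - m - m) * (Kc d + Kc d)) := by
          have := lemA (α := m) (β := m) (by rw [hm]; norm_num)
            (by rw [hm]; push_cast; linarith) (by rw [hm]; norm_num)
            (by rw [hm]; push_cast; linarith) (u - b)
          convert this using 3 <;> rw [hs]
  have split : ∀ u : Fin d → ℤ, latPow (u - a) (-m) * Gc (u - b) (s - m - m) ≤
      latPow (u - a) (-m) * latPow (u - b) (s - m - m) + (if u = b then 1 else 0) := by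
    intro u
    by_cases hub : u = b
    · rw [hub, sub_self, Gc_zero, if_pos rfl, mul_one]
      have h0 : latPow (0 : Fin d → ℤ) (s - m - m) = 0 := by simp [latPow]
      rw [h0, mul_zero, zero_add]
      exact latPow_le_one (by rw [hm]; linarith)
    · rw [Gc_of_ne (sub_ne_zero.2 hub), if_neg hub, add_zero]
  have use2 : ∑' u : Fin d → ℤ, latPow (u - a) (-m) * latPow (u - b) (s - m - m) ≤
      ENNReal.ofReal (2 ^ (m + (m + m - s))) * (Kc d + Kc d) := by
    calc ∑' u : Fin d → ℤ, latPow (u - a) (-m) * latPow (u - b) (s - m - m)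
        = ∑' u : Fin d → ℤ,
            (fun z => latPow z (-m) * latPow (z - (b - a)) (-(m + m - s))) (u - a) := by
          apply tsum_congr; intro u
          simp only
          rw [sub_sub_sub_cancel_right, show -(m + m - s) = s - m - m by ring]
      _ = ∑' z : Fin d → ℤ, latPow z (-m) * latPow (z - (b - a)) (-(m + m - s)) :=
          tsum_shift (fun z => latPow z (-m) * latPow (z - (b - a)) (-(m + m - s))) a
      _ ≤ ENNReal.ofReal (2 ^ (m + (m + m - s))) *
            (Gc (b - a) (s - m - (m + m - s)) * (Kc d + Kc d)) := by
          have := lemA (α := m) (β := m + m - s) (by rw [hm]; norm_num)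
            (by rw [hm, hs]; push_cast; linarith) (by rw [hm, hs]; push_cast; linarith)
            (by rw [hm, hs]; push_cast; linarith) (b - a)
          convert this using 3 <;> rw [hs]
      _ ≤ ENNReal.ofReal (2 ^ (m + (m + m - s))) * (1 * (Kc d + Kc d)) := by
          exact mul_le_mul' le_rfl (mul_le_mul' (Gc_le_one (by rw [hm, hs]; push_cast; linarith)) le_rfl)
      _ = ENNReal.ofReal (2 ^ (m + (m + m - s))) * (Kc d + Kc d) := by rw [one_mul]
  calc ∑' u : Fin d → ℤ, ∑' v : Fin d → ℤ,
        latPow (u - a) ((2 : ℝ) - d) * latPow (v - b) ((2 : ℝ) - d) *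
          latPow (u - v) ((2 : ℝ) - d)
      = ∑' u : Fin d → ℤ, latPow (u - a) (-m) *
          ∑' v : Fin d → ℤ, latPow (v - b) (-m) * latPow (u - v) (-m) := by
        simp only [hm2]
        apply tsum_congr; intro u
        rw [← ENNReal.tsum_mul_left]
        apply tsum_congr; intro v
        ring
    _ ≤ ∑' u : Fin d → ℤ, latPow (u - a) (-m) *
          (ENNReal.ofReal (2 ^ (m + m)) * (Gc (u - b) (s - m - m) * (Kc d + Kc d))) :=
        ENNReal.tsum_le_tsum fun u => mul_le_mul' le_rfl (inner u)
    _ = (ENNReal.ofReal (2 ^ (m + m)) * (Kc d + Kc d)) *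
          ∑' u : Fin d → ℤ, latPow (u - a) (-m) * Gc (u - b) (s - m - m) := by
        rw [← ENNReal.tsum_mul_left]
        apply tsum_congr; intro u
        ring
    _ ≤ (ENNReal.ofReal (2 ^ (m + m)) * (Kc d + Kc d)) *
          ((∑' u : Fin d → ℤ, latPow (u - a) (-m) * latPow (u - b) (s - m - m)) + 1) := by
        apply mul_le_mul' le_rfl
        calc ∑' u : Fin d → ℤ, latPow (u - a) (-m) * Gc (u - b) (s - m - m)
            ≤ ∑' u : Fin d → ℤ, (latPow (u - a) (-m) * latPow (u - b) (s - m - m) +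
                (if u = b then 1 else 0)) := ENNReal.tsum_le_tsum split
          _ = (∑' u : Fin d → ℤ, latPow (u - a) (-m) * latPow (u - b) (s - m - m)) +
                ∑' u : Fin d → ℤ, (if u = b then (1:ℝ≥0∞) else 0) := ENNReal.tsum_add
          _ = _ := by rw [tsum_ite_eq]
    _ ≤ (ENNReal.ofReal (2 ^ (m + m)) * (Kc d + Kc d)) *
          ((ENNReal.ofReal (2 ^ (m + (m + m - s))) * (Kc d + Kc d)) + 1) :=
        mul_le_mul' le_rfl (add_le_add_left use2 1)
    _ = Cd d := by rw [Cd, hm, hs]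

lemma pair (hd : 6 < d) {x : Fin d → ℤ} (hx : x ≠ 0) (u : Fin d → ℤ) :
    latPow u ((2 : ℝ) - d) * latPow (u - x) ((2 : ℝ) - d) ≤
      ENNReal.ofReal (2 ^ ((d : ℝ) - 2) * ‖x‖ ^ (-((d : ℝ) - 2))) *
        (latPow u ((2 : ℝ) - d) + latPow (u - x) ((2 : ℝ) - d)) := by
  have hd7 : (7 : ℝ) ≤ (d : ℝ) := by exact_mod_cast hd
  set m : ℝ := (d : ℝ) - 2 with hm
  have hm0 : (0 : ℝ) ≤ m := by rw [hm]; linarith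
  have hm2 : (2 : ℝ) - (d : ℝ) = -m := by rw [hm]; ring
  by_cases hu : u = 0
  · simp [latPow, hu]
  by_cases hux : u - x = 0
  · simp [latPow, hux]
  have hA : (1 : ℝ) ≤ ‖u‖ := one_le_norm hu
  have hB : (1 : ℝ) ≤ ‖u - x‖ := one_le_norm hux
  have hX : (1 : ℝ) ≤ ‖x‖ := one_le_norm hx
  have hsum : ‖x‖ ≤ ‖u‖ + ‖u - x‖ := by
    have h := norm_sub_le u (u - x)
    have h2 : u - (u - x) = x := by abel
    rwa [h2] at h
  rw [hm2, latPow, if_neg hu, latPow, if_neg hux,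
    ← ENNReal.ofReal_add (by positivity) (by positivity),
    ← ENNReal.ofReal_mul (by positivity), ← ENNReal.ofReal_mul (by positivity)]
  apply ENNReal.ofReal_le_ofReal
  rcases le_total ‖u‖ ‖u - x‖ with h | h
  · have hr : ‖u - x‖ ^ (-m) ≤ 2 ^ m * ‖x‖ ^ (-m) := real_pair hB hX hm0 (by linarith)
    calc ‖u‖ ^ (-m) * ‖u - x‖ ^ (-m)
        ≤ ‖u‖ ^ (-m) * (2 ^ m * ‖x‖ ^ (-m)) :=
          mul_le_mul_of_nonneg_left hr (by positivity)
      _ ≤ 2 ^ m * ‖x‖ ^ (-m) * (‖u‖ ^ (-m) + ‖u - x‖ ^ (-m)) := by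
          have hc : (0:ℝ) ≤ 2 ^ m * ‖x‖ ^ (-m) := by positivity
          have hb : (0:ℝ) ≤ ‖u - x‖ ^ (-m) := by positivity
          nlinarith
  · have hr : ‖u‖ ^ (-m) ≤ 2 ^ m * ‖x‖ ^ (-m) := real_pair hA hX hm0 (by linarith)
    calc ‖u‖ ^ (-m) * ‖u - x‖ ^ (-m)
        ≤ (2 ^ m * ‖x‖ ^ (-m)) * ‖u - x‖ ^ (-m) :=
          mul_le_mul_of_nonneg_right hr (by positivity)
      _ ≤ 2 ^ m * ‖x‖ ^ (-m) * (‖u‖ ^ (-m) + ‖u - x‖ ^ (-m)) := by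
          have hc : (0:ℝ) ≤ 2 ^ m * ‖x‖ ^ (-m) := by positivity
          have hb : (0:ℝ) ≤ ‖u‖ ^ (-m) := by positivity
          nlinarith

theorem statement2 (d : ℕ) (hd : 6 < d) :
    ∃ C : ℝ, 0 < C ∧ ∀ x y : Fin d → ℤ, x ≠ 0 → y ≠ 0 →
      ∑' u : Fin d → ℤ, ∑' v : Fin d → ℤ,
        latPow (u - x) ((2 : ℝ) - d) * latPow (v - y) ((2 : ℝ) - d) *
          latPow u ((2 : ℝ) - d) * latPow v ((2 : ℝ) - d) * latPow (u - v) ((2 : ℝ) - d) ≤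
        ENNReal.ofReal (C * (‖x‖ ^ ((2 : ℝ) - d) * ‖y‖ ^ ((2 : ℝ) - d))) := by
  have hd0 : 0 < d := by omega
  have hKtop : Kc d ≠ ⊤ := Kc_ne_top hd0
  have hCdtop : Cd d ≠ ⊤ := by
    rw [Cd]
    refine ENNReal.mul_ne_top
      (ENNReal.mul_ne_top ENNReal.ofReal_ne_top (ENNReal.add_ne_top.2 ⟨hKtop, hKtop⟩)) ?_
    exact ENNReal.add_ne_top.2
      ⟨ENNReal.mul_ne_top ENNReal.ofReal_ne_top (ENNReal.add_ne_top.2 ⟨hKtop, hKtop⟩),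
        ENNReal.one_ne_top⟩
  set m : ℝ := (d : ℝ) - 2 with hm
  have hm2 : (2 : ℝ) - (d : ℝ) = -m := by rw [hm]; ring
  set T : ℝ := (4 * Cd d).toReal with hT
  have hT0 : 0 ≤ T := ENNReal.toReal_nonneg
  refine ⟨2 ^ m * 2 ^ m * T + 1, by positivity, ?_⟩
  intro x y hx hy
  set e : ℝ := (2 : ℝ) - (d : ℝ) with he
  have hpt : ∀ u v : Fin d → ℤ,
      latPow (u - x) e * latPow (v - y) e * latPow u e * latPow v e * latPow (u - v) e ≤
      (ENNReal.ofReal (2 ^ m * ‖x‖ ^ (-m)) * ENNReal.ofReal (2 ^ m * ‖y‖ ^ (-m))) *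
        (latPow (u - 0) e * latPow (v - 0) e * latPow (u - v) e +
         latPow (u - 0) e * latPow (v - y) e * latPow (u - v) e +
         latPow (u - x) e * latPow (v - 0) e * latPow (u - v) e +
         latPow (u - x) e * latPow (v - y) e * latPow (u - v) e) := by
    intro u v
    have e1 : latPow (u - x) e * latPow (v - y) e * latPow u e * latPow v e * latPow (u - v) e
        = (latPow u e * latPow (u - x) e) *
          ((latPow v e * latPow (v - y) e) * latPow (u - v) e) := by ring
    rw [e1]
    calc (latPow u e * latPow (u - x) e) *
          ((latPow v e * latPow (v - y) e) * latPow (u - v) e)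
        ≤ (ENNReal.ofReal (2 ^ m * ‖x‖ ^ (-m)) * (latPow u e + latPow (u - x) e)) *
          ((ENNReal.ofReal (2 ^ m * ‖y‖ ^ (-m)) * (latPow v e + latPow (v - y) e)) *
            latPow (u - v) e) := by
          refine mul_le_mul' ?_ (mul_le_mul' ?_ le_rfl)
          · exact he ▸ hm ▸ pair hd hx u
          · exact he ▸ hm ▸ pair hd hy v
      _ = _ := by
          simp only [sub_zero]
          ring
  calc ∑' u : Fin d → ℤ, ∑' v : Fin d → ℤ,
        latPow (u - x) e * latPow (v - y) e * latPow u e * latPow v e * latPow (u - v) e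
      ≤ ∑' u : Fin d → ℤ, ∑' v : Fin d → ℤ,
        (ENNReal.ofReal (2 ^ m * ‖x‖ ^ (-m)) * ENNReal.ofReal (2 ^ m * ‖y‖ ^ (-m))) *
          (latPow (u - 0) e * latPow (v - 0) e * latPow (u - v) e +
           latPow (u - 0) e * latPow (v - y) e * latPow (u - v) e +
           latPow (u - x) e * latPow (v - 0) e * latPow (u - v) e +
           latPow (u - x) e * latPow (v - y) e * latPow (u - v) e) :=
        ENNReal.tsum_le_tsum fun u => ENNReal.tsum_le_tsum fun v => hpt u v
    _ = (ENNReal.ofReal (2 ^ m * ‖x‖ ^ (-m)) * ENNReal.ofReal (2 ^ m * ‖y‖ ^ (-m))) *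
        ((∑' u : Fin d → ℤ, ∑' v : Fin d → ℤ,
            latPow (u - 0) e * latPow (v - 0) e * latPow (u - v) e) +
         (∑' u : Fin d → ℤ, ∑' v : Fin d → ℤ,
            latPow (u - 0) e * latPow (v - y) e * latPow (u - v) e) +
         (∑' u : Fin d → ℤ, ∑' v : Fin d → ℤ,
            latPow (u - x) e * latPow (v - 0) e * latPow (u - v) e) +
         (∑' u : Fin d → ℤ, ∑' v : Fin d → ℤ,
            latPow (u - x) e * latPow (v - y) e * latPow (u - v) e)) := by
        simp only [ENNReal.tsum_mul_left, ENNReal.tsum_add]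
    _ ≤ (ENNReal.ofReal (2 ^ m * ‖x‖ ^ (-m)) * ENNReal.ofReal (2 ^ m * ‖y‖ ^ (-m))) *
          (Cd d + Cd d + Cd d + Cd d) := by
        refine mul_le_mul' le_rfl ?_
        exact add_le_add (add_le_add (add_le_add (lemT hd 0 0) (lemT hd 0 y))
          (lemT hd x 0)) (lemT hd x y)
    _ ≤ ENNReal.ofReal ((2 ^ m * 2 ^ m * T + 1) * (‖x‖ ^ e * ‖y‖ ^ e)) := by
        have h4 : Cd d + Cd d + Cd d + Cd d = 4 * Cd d := by ring
        have h4' : (4 : ℝ≥0∞) * Cd d = ENNReal.ofReal T := by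
          rw [hT, ENNReal.ofReal_toReal]
          exact ENNReal.mul_ne_top (by norm_num) hCdtop
        rw [h4, h4', ← ENNReal.ofReal_mul (by positivity), ← ENNReal.ofReal_mul (by positivity)]
        apply ENNReal.ofReal_le_ofReal
        have hxn : (1:ℝ) ≤ ‖x‖ := one_le_norm hx
        have hyn : (1:ℝ) ≤ ‖y‖ := one_le_norm hy
        have hex : ‖x‖ ^ e = ‖x‖ ^ (-m) := by rw [hm2]
        have hey : ‖y‖ ^ e = ‖y‖ ^ (-m) := by rw [hm2]
        rw [hex, hey]
        have key : 2 ^ m * ‖x‖ ^ (-m) * (2 ^ m * ‖y‖ ^ (-m)) * T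
            = (2 ^ m * 2 ^ m * T) * (‖x‖ ^ (-m) * ‖y‖ ^ (-m)) := by ring
        rw [key]
        apply mul_le_mul_of_nonneg_right (by linarith) (by positivity)
end
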